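/- arXiv:1511.01789 — 8 statements merged into one kernel-verified Lean document; each statement's English description precedes it below -/
import Mathlib

section
/- For every natural number J, the number of natural numbers n with 1 ≤ n ≤ 2·10^J whose leading (most significant) decimal digit is 1 is at least 10^J, i.e. at least half of all such n. -/
open scoped Classical

/-- For every natural `J`, at least `10^J` of the numbers `1 ≤ n ≤ 2·10^J`
have leading decimal digit `1`, i.e. `10^j ≤ n < 2·10^j` for some `j`. -/
theorem stmt0 (J : ℕ) :
    10 ^ J ≤ ((Finset.Icc 1 (2 * 10 ^ J)).filter
      (fun n => ∃ j : ℕ, 10 ^ j ≤ n ∧ n < 2 * 10 ^ j)).card := by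
  have hsub : Finset.Ico (10 ^ J) (2 * 10 ^ J) ⊆
      (Finset.Icc 1 (2 * 10 ^ J)).filter
        (fun n => ∃ j : ℕ, 10 ^ j ≤ n ∧ n < 2 * 10 ^ j) := by
    intro n hn
    rw [Finset.mem_Ico] at hn
    rw [Finset.mem_filter, Finset.mem_Icc]
    exact ⟨⟨le_trans (Nat.one_le_pow _ _ (by norm_num)) hn.1, le_of_lt hn.2⟩,
      ⟨J, hn.1, hn.2⟩⟩
  calc 10 ^ J = (Finset.Ico (10 ^ J) (2 * 10 ^ J)).card := by
        rw [Nat.card_Ico]; omega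
    _ ≤ _ := Finset.card_le_card hsub
end

section
/- Let x_n = 0.(n)(n+1)(n+2)... be the real number in [0,1) obtained by concatenating the decimal expansions of n, n+1, n+2, ... after the decimal point. Then the sequence (x_n) is not uniformly distributed over [0.1, 1): specifically, limsup_{N→∞} (1/N)·#{n ≤ N : x_n ∈ [0.1, 0.2)} ≥ 1/2 > 1/9. -/
open scoped Classical
open Filter

/-- Number of decimal digits of `m`. -/
def numDigits (m : ℕ) : ℕ := (Nat.digits 10 m).length

/-- The natural number obtained by concatenating the decimal expansions of
`a 0, a 1, …, a K`. -/
def concatBlock (a : ℕ → ℕ) : ℕ → ℕ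
  | 0 => a 0
  | K + 1 => concatBlock a K * 10 ^ numDigits (a (K + 1)) + a (K + 1)

/-- The total number of decimal digits of `a 0, a 1, …, a K`. -/
def totalDigits (a : ℕ → ℕ) : ℕ → ℕ
  | 0 => numDigits (a 0)
  | K + 1 => totalDigits a K + numDigits (a (K + 1))

/-- The real number `0.(a 0)(a 1)(a 2)…` obtained by concatenating the decimal
expansions of `a 0, a 1, a 2, …` after the decimal point. -/
noncomputable def concatReal (a : ℕ → ℕ) : ℝ :=
  ⨆ K : ℕ, (concatBlock a K : ℝ) / 10 ^ totalDigits a K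

/-- `x` is uniformly distributed mod 1 over `[α, β)`. -/
def UDOver (x : ℕ → ℝ) (α β : ℝ) : Prop :=
  ∀ a b : ℝ, α ≤ a → a < b → b ≤ β →
    Filter.Tendsto
      (fun N : ℕ => (((Finset.Icc 1 N).filter (fun n => x n ∈ Set.Ico a b)).card : ℝ) / N)
      Filter.atTop (nhds ((b - a) / (β - α)))

lemma lt_pow_numDigits (m : ℕ) : m < 10 ^ numDigits m :=
  Nat.lt_base_pow_length_digits (by norm_num)

lemma concatBlock_mono (a : ℕ → ℕ) (J K : ℕ) (h : J ≤ K) :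
    concatBlock a J * 10 ^ totalDigits a K ≤ concatBlock a K * 10 ^ totalDigits a J := by
  induction K, h using Nat.le_induction with
  | base => exact le_rfl
  | succ K hJK ih =>
    have hT : totalDigits a (K+1) = totalDigits a K + numDigits (a (K+1)) := rfl
    have hB : concatBlock a (K+1) = concatBlock a K * 10 ^ numDigits (a (K+1)) + a (K+1) := rfl
    calc concatBlock a J * 10 ^ totalDigits a (K+1)
        = concatBlock a J * 10 ^ totalDigits a K * 10 ^ numDigits (a (K+1)) := by
          rw [hT, pow_add]; ring
      _ ≤ concatBlock a K * 10 ^ totalDigits a J * 10 ^ numDigits (a (K+1)) :=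
          Nat.mul_le_mul_right _ ih
      _ ≤ concatBlock a (K+1) * 10 ^ totalDigits a J := by
          rw [hB]; nlinarith [Nat.zero_le (a (K+1) * 10 ^ totalDigits a J)]

lemma concatBlock_upper (a : ℕ → ℕ) (J K : ℕ) (h : J ≤ K) :
    (concatBlock a K + 1) * 10 ^ totalDigits a J ≤ (concatBlock a J + 1) * 10 ^ totalDigits a K := by
  induction K, h using Nat.le_induction with
  | base => exact le_rfl
  | succ K hJK ih =>
    have hT : totalDigits a (K+1) = totalDigits a K + numDigits (a (K+1)) := rfl
    have hB : concatBlock a (K+1) = concatBlock a K * 10 ^ numDigits (a (K+1)) + a (K+1) := rfl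
    have ha : a (K+1) + 1 ≤ 10 ^ numDigits (a (K+1)) := lt_pow_numDigits _
    calc (concatBlock a (K+1) + 1) * 10 ^ totalDigits a J
        ≤ (concatBlock a K + 1) * 10 ^ numDigits (a (K+1)) * 10 ^ totalDigits a J := by
          rw [hB]; nlinarith [Nat.zero_le (10 ^ totalDigits a J)]
      _ = (concatBlock a K + 1) * 10 ^ totalDigits a J * 10 ^ numDigits (a (K+1)) := by ring
      _ ≤ (concatBlock a J + 1) * 10 ^ totalDigits a K * 10 ^ numDigits (a (K+1)) :=
          Nat.mul_le_mul_right _ ih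
      _ = (concatBlock a J + 1) * 10 ^ totalDigits a (K+1) := by rw [hT, pow_add]; ring

lemma term_le_bound (a : ℕ → ℕ) (K : ℕ) :
    (concatBlock a K : ℝ) / 10 ^ totalDigits a K
      ≤ ((concatBlock a 1 : ℝ) + 1) / 10 ^ totalDigits a 1 := by
  rw [div_le_div_iff₀ (by positivity) (by positivity)]
  rcases Nat.lt_or_ge K 1 with hK | hK
  · interval_cases K
    have h := concatBlock_mono a 0 1 (by norm_num)
    calc (concatBlock a 0 : ℝ) * 10 ^ totalDigits a 1
        ≤ (concatBlock a 1 : ℝ) * 10 ^ totalDigits a 0 := by exact_mod_cast h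
      _ ≤ ((concatBlock a 1 : ℝ) + 1) * 10 ^ totalDigits a 0 :=
          mul_le_mul_of_nonneg_right (by linarith) (by positivity)
  · have h := concatBlock_upper a 1 K hK
    have h2 : (concatBlock a K : ℕ) * 10 ^ totalDigits a 1
        ≤ (concatBlock a 1 + 1) * 10 ^ totalDigits a K :=
      le_trans (Nat.mul_le_mul_right _ (Nat.le_succ _)) h
    exact_mod_cast h2

lemma concatReal_le (a : ℕ → ℕ) :
    concatReal a ≤ ((concatBlock a 1 : ℝ) + 1) / 10 ^ totalDigits a 1 :=
  ciSup_le (term_le_bound a)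

lemma concatReal_ge (a : ℕ → ℕ) :
    (concatBlock a 0 : ℝ) / 10 ^ totalDigits a 0 ≤ concatReal a :=
  le_ciSup ⟨_, Set.forall_mem_range.mpr (term_le_bound a)⟩ 0

lemma numDigits_eq {n k : ℕ} (h1 : 10 ^ k ≤ n) (h2 : n < 10 ^ (k+1)) : numDigits n = k + 1 := by
  have hn : n ≠ 0 := by
    have : 0 < 10 ^ k := Nat.pow_pos (by norm_num)
    omega
  rw [numDigits, Nat.digits_len 10 n (by norm_num) hn,
    Nat.log_eq_of_pow_le_of_lt_pow h1 h2]

lemma numDigits_ge {n k : ℕ} (h1 : 10 ^ k ≤ n) : k + 1 ≤ numDigits n := by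
  have hn : n ≠ 0 := by
    have : 0 < 10 ^ k := Nat.pow_pos (by norm_num)
    omega
  rw [numDigits, Nat.digits_len 10 n (by norm_num) hn]
  have h2 : Nat.log 10 (10 ^ k) ≤ Nat.log 10 n := Nat.log_mono_right h1
  rw [Nat.log_pow (by norm_num)] at h2
  omega

lemma mem_interval {n k : ℕ} (h1 : 10 ^ k ≤ n) (h2 : n < 2 * 10 ^ k) :
    concatReal (fun i => n + i) ∈ Set.Ico (0.1 : ℝ) 0.2 := by
  set a : ℕ → ℕ := fun i => n + i with ha
  have ha0 : a 0 = n := Nat.add_zero n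
  have ha1 : a 1 = n + 1 := rfl
  have hd : numDigits n = k + 1 := numDigits_eq h1 (by
    have : (2:ℕ) * 10 ^ k ≤ 10 ^ (k+1) := by rw [pow_succ]; omega
    omega)
  have he : k + 1 ≤ numDigits (n+1) := numDigits_ge (le_trans h1 (Nat.le_succ n))
  set e := numDigits (n+1) with hee
  have hT0 : totalDigits a 0 = k + 1 := by
    show numDigits (a 0) = k + 1; rw [ha0, hd]
  have hB0 : concatBlock a 0 = n := ha0
  have hT1 : totalDigits a 1 = (k+1) + e := by
    show totalDigits a 0 + numDigits (a 1) = (k+1) + e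
    rw [hT0, ha1]
  have hB1 : concatBlock a 1 = n * 10 ^ e + (n+1) := by
    show concatBlock a 0 * 10 ^ numDigits (a 1) + a 1 = _
    rw [hB0, ha1]
  constructor
  · have hge := concatReal_ge a
    rw [hB0, hT0] at hge
    refine le_trans ?_ hge
    rw [le_div_iff₀ (by positivity)]
    have h1' : (10:ℝ) ^ k ≤ (n:ℝ) := by exact_mod_cast h1
    calc (0.1 : ℝ) * 10 ^ (k+1) = 10 ^ k := by rw [pow_succ]; ring
      _ ≤ (n:ℝ) := h1'
  · have hle := concatReal_le a
    rw [hB1, hT1] at hle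
    refine lt_of_le_of_lt hle ?_
    rw [div_lt_iff₀ (by positivity)]
    have hE : (10:ℝ) ^ (k+1) ≤ 10 ^ e := by
      apply pow_le_pow_right₀ (by norm_num) he
    have hX : ((n:ℝ) + 1) ≤ 2 * 10 ^ k := by
      have : (n+1 : ℕ) ≤ 2 * 10 ^ k := h2
      exact_mod_cast this
    have hXE : (n:ℝ) + 2 < 10 ^ e := by
      have : (10:ℝ)^(k+1) = 10 * 10^k := by rw [pow_succ]; ring
      nlinarith [pow_pos (show (0:ℝ) < 10 by norm_num) k]
    have hEpos : (0:ℝ) < 10 ^ e := by positivity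
    have hXpos : (0:ℝ) < 10 ^ k := by positivity
    push_cast
    calc (n:ℝ) * 10 ^ e + (n + 1) + 1 = (n:ℝ) * 10 ^ e + (n + 2) := by ring
      _ < (n:ℝ) * 10 ^ e + 10 ^ e := by linarith
      _ = ((n:ℝ) + 1) * 10 ^ e := by ring
      _ ≤ (2 * 10 ^ k) * 10 ^ e := mul_le_mul_of_nonneg_right hX (le_of_lt hEpos)
      _ = 0.2 * 10 ^ ((k+1) + e) := by rw [pow_add, pow_succ]; ring

/-- With `x n = 0.(n)(n+1)(n+2)…`, the proportion of `n ≤ N` with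
`x n ∈ [0.1, 0.2)` has limsup at least `1/2 > 1/9`; hence `(x n)` is not
uniformly distributed mod 1 over `[0.1, 1)`. -/
theorem stmt1 :
    (1 / 2 : ℝ) ≤ Filter.limsup
      (fun N : ℕ => (((Finset.Icc 1 N).filter
        (fun n => concatReal (fun i => n + i) ∈ Set.Ico (0.1 : ℝ) 0.2)).card : ℝ) / N)
      Filter.atTop
    ∧ (1 / 2 : ℝ) > 1 / 9
    ∧ ¬ UDOver (fun n => concatReal (fun i => n + i)) 0.1 1 := by
  set f : ℕ → ℝ := fun N : ℕ => (((Finset.Icc 1 N).filter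
      (fun n => concatReal (fun i => n + i) ∈ Set.Ico (0.1 : ℝ) 0.2)).card : ℝ) / N with hf
  have hbound : IsBoundedUnder (· ≤ ·) atTop f := by
    refine isBoundedUnder_of ⟨1, fun N => ?_⟩
    rcases Nat.eq_zero_or_pos N with rfl | hN
    · simp [hf]
    · rw [hf]
      have hcard : ((Finset.Icc 1 N).filter
          (fun n => concatReal (fun i => n + i) ∈ Set.Ico (0.1 : ℝ) 0.2)).card ≤ N := by
        refine le_trans (Finset.card_filter_le _ _) ?_
        simp [Nat.card_Icc]
      rw [div_le_one (by exact_mod_cast hN)]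
      exact_mod_cast hcard
  have hmain : (1 / 2 : ℝ) ≤ Filter.limsup f Filter.atTop := by
    apply Filter.le_limsup_of_frequently_le _ hbound
    rw [Filter.frequently_atTop]
    intro M
    refine ⟨2 * 10 ^ M - 1, ?_, ?_⟩
    · have := Nat.lt_pow_self (n := M) (show 1 < 10 by norm_num)
      omega
    · set N := 2 * 10 ^ M - 1 with hN
      have hp : 0 < 10 ^ M := Nat.pow_pos (by norm_num)
      have hsub : Finset.Icc (10 ^ M) (2 * 10 ^ M - 1) ⊆
          (Finset.Icc 1 N).filter
            (fun n => concatReal (fun i => n + i) ∈ Set.Ico (0.1 : ℝ) 0.2) := by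
        intro n hn
        rw [Finset.mem_Icc] at hn
        rw [Finset.mem_filter, Finset.mem_Icc]
        refine ⟨⟨by omega, by omega⟩, mem_interval hn.1 (by omega)⟩
      have hcard : 10 ^ M ≤ ((Finset.Icc 1 N).filter
          (fun n => concatReal (fun i => n + i) ∈ Set.Ico (0.1 : ℝ) 0.2)).card := by
        have := Finset.card_le_card hsub
        rwa [Nat.card_Icc, show 2 * 10 ^ M - 1 + 1 - 10 ^ M = 10 ^ M by omega] at this
      rw [hf]
      have hNpos : 0 < N := by omega
      rw [le_div_iff₀ (by exact_mod_cast hNpos)]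
      have hc : (10:ℝ) ^ M ≤ ((Finset.Icc 1 N).filter
          (fun n => concatReal (fun i => n + i) ∈ Set.Ico (0.1 : ℝ) 0.2)).card := by
        exact_mod_cast hcard
      have hNle : (N:ℝ) ≤ 2 * 10 ^ M := by
        have : (N:ℕ) ≤ 2 * 10 ^ M := by omega
        exact_mod_cast this
      linarith
  refine ⟨hmain, by norm_num, ?_⟩
  intro h
  have ht := h 0.1 0.2 le_rfl (by norm_num) (by norm_num)
  have hls : Filter.limsup f Filter.atTop = ((0.2 - 0.1) / (1 - 0.1) : ℝ) :=
    ht.limsup_eq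
  rw [hls] at hmain
  norm_num at hmain
end

section
/- Fix a natural number k ≥ 1. With n_J = ⌊2·10^J / k⌋, one has limsup_{J→∞} (1/n_J)·#{n ≤ n_J : kn has leading decimal digit 1} ≥ 5/9. -/
open scoped Classical
open Filter

lemma card_lower (k J : ℕ) (hk : 1 ≤ k) :
    ((10:ℝ)^(J+1) - 1)/(9*(k:ℝ)) - (J+1) ≤
      (((Finset.Icc 1 (2 * 10 ^ J / k)).filter
          (fun n => ∃ j : ℕ, 10 ^ j ≤ k * n ∧ k * n < 2 * 10 ^ j)).card : ℝ) := by
  have hk0 : (0:ℝ) < k := by exact_mod_cast hk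
  set a : ℕ → ℕ := fun j => (10^j + k - 1)/k with ha
  set b : ℕ → ℕ := fun j => (2*10^j - 1)/k with hb
  -- key nat facts
  have hpow : ∀ j : ℕ, 1 ≤ 10^j := fun j => Nat.one_le_pow _ _ (by norm_num)
  have hfa : ∀ j, k * a j + 1 ≤ 10^j + k ∧ 10^j ≤ k * a j := by
    intro j
    have h1 : k * a j + (10^j + k - 1) % k = 10^j + k - 1 := Nat.div_add_mod _ _
    have h2 := Nat.mod_lt (10^j + k - 1) (by omega : 0 < k)
    have := hpow j
    constructor <;> omega
  have hfb : ∀ j, 2*10^j ≤ k * b j + k ∧ k * b j + 1 ≤ 2*10^j := by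
    intro j
    have h1 : k * b j + (2*10^j - 1) % k = 2*10^j - 1 := Nat.div_add_mod _ _
    have h2 := Nat.mod_lt (2*10^j - 1) (by omega : 0 < k)
    have := hpow j
    constructor <;> omega
  have hab : ∀ j, a j ≤ b j + 1 := by
    intro j
    have h1 := (hfa j).1
    have h2 := (hfb j).1
    have : k * a j < k * (b j + 2) := by
      have := hpow j
      calc k * a j < 10^j + k := by omega
        _ ≤ 2*10^j + k := by omega
        _ ≤ k * b j + k + k := by omega
        _ = k * (b j + 2) := by ring
    exact by
      have := Nat.lt_of_mul_lt_mul_left this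
      omega
  -- biUnion subset
  have hsub : (Finset.range (J+1)).biUnion (fun j => Finset.Icc (a j) (b j)) ⊆
      (Finset.Icc 1 (2 * 10 ^ J / k)).filter
          (fun n => ∃ j : ℕ, 10 ^ j ≤ k * n ∧ k * n < 2 * 10 ^ j) := by
    intro n hn
    obtain ⟨j, hj, hn⟩ := Finset.mem_biUnion.1 hn
    rw [Finset.mem_Icc] at hn
    rw [Finset.mem_range] at hj
    have hja : j ≤ J := by omega
    have hkn1 : 10^j ≤ k * n := le_trans (hfa j).2 (Nat.mul_le_mul_left _ hn.1)
    have hkn2 : k * n < 2*10^j := by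
      have := Nat.mul_le_mul_left k hn.2
      have := (hfb j).2
      omega
    refine Finset.mem_filter.2 ⟨Finset.mem_Icc.2 ⟨?_, ?_⟩, j, hkn1, hkn2⟩
    · have h1 : 1 ≤ a j := (Nat.one_le_div_iff (by omega)).2 (by have := hpow j; omega)
      omega
    · calc n ≤ b j := hn.2
        _ ≤ (2*10^J)/k := by
          apply Nat.div_le_div_right
          have : 10^j ≤ 10^J := Nat.pow_le_pow_right (by norm_num) hja
          omega
  -- disjointness
  have hdisj : ∀ i ∈ Finset.range (J+1), ∀ j ∈ Finset.range (J+1), i ≠ j →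
      Disjoint (Finset.Icc (a i) (b i)) (Finset.Icc (a j) (b j)) := by
    have key : ∀ i j : ℕ, i < j → Disjoint (Finset.Icc (a i) (b i)) (Finset.Icc (a j) (b j)) := by
      intro i j hij
      rw [Finset.disjoint_left]
      intro n hni hnj
      rw [Finset.mem_Icc] at hni hnj
      have h1 : k * n < 2*10^i := by
        have := Nat.mul_le_mul_left k hni.2
        have := (hfb i).2
        omega
      have h2 : 10^j ≤ k * n := le_trans (hfa j).2 (Nat.mul_le_mul_left _ hnj.1)
      have h3 : 2*10^i ≤ 10^j := by
        calc 2*10^i ≤ 10*10^i := by omega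
          _ = 10^(i+1) := by ring
          _ ≤ 10^j := Nat.pow_le_pow_right (by norm_num) (by omega)
      omega
    intro i hi j hj hij
    rcases Nat.lt_or_ge i j with h | h
    · exact key i j h
    · exact (key j i (by omega)).symm
  have hcard := Finset.card_biUnion hdisj
  have hle : ((Finset.range (J+1)).biUnion (fun j => Finset.Icc (a j) (b j))).card ≤
      ((Finset.Icc 1 (2 * 10 ^ J / k)).filter
          (fun n => ∃ j : ℕ, 10 ^ j ≤ k * n ∧ k * n < 2 * 10 ^ j)).card :=
    Finset.card_le_card hsub
  -- per-term real bound
  have hterm : ∀ j, (10:ℝ)^j/(k:ℝ) - 1 ≤ ((Finset.Icc (a j) (b j)).card : ℝ) := by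
    intro j
    rw [Nat.card_Icc]
    have h := hab j
    have hca : ((b j + 1 - a j : ℕ) : ℝ) = (b j : ℝ) + 1 - (a j : ℝ) := by
      push_cast [Nat.cast_sub h]
      ring
    rw [hca]
    have h1 : (k:ℝ) * a j + 1 ≤ 10^j + k := by exact_mod_cast (hfa j).1
    have h2 : 2*(10:ℝ)^j ≤ k * b j + k := by exact_mod_cast (hfb j).1
    rw [sub_le_iff_le_add, div_le_iff₀ hk0]
    nlinarith
  -- sum
  calc ((10:ℝ)^(J+1) - 1)/(9*(k:ℝ)) - (J+1)
      = ∑ j ∈ Finset.range (J+1), ((10:ℝ)^j/(k:ℝ) - 1) := by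
        rw [Finset.sum_sub_distrib, ← Finset.sum_div, geom_sum_eq (by norm_num : (10:ℝ) ≠ 1)]
        simp
        ring
    _ ≤ ∑ j ∈ Finset.range (J+1), ((Finset.Icc (a j) (b j)).card : ℝ) :=
        Finset.sum_le_sum (fun j _ => hterm j)
    _ = (((Finset.range (J+1)).biUnion (fun j => Finset.Icc (a j) (b j))).card : ℝ) := by
        rw [hcard]; push_cast; ring
    _ ≤ _ := by exact_mod_cast hle

/-- For fixed `k ≥ 1` and `n_J = ⌊2·10^J/k⌋`, the limsup over `J` of
the proportion of `n ≤ n_J` for which `k·n` has leading decimal digit `1`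
is at least `5/9`. -/
theorem stmt3 (k : ℕ) (hk : 1 ≤ k) :
    (5 / 9 : ℝ) ≤ Filter.limsup
      (fun J : ℕ =>
        (((Finset.Icc 1 (2 * 10 ^ J / k)).filter
            (fun n => ∃ j : ℕ, 10 ^ j ≤ k * n ∧ k * n < 2 * 10 ^ j)).card : ℝ)
          / ((2 * 10 ^ J / k : ℕ) : ℝ))
      Filter.atTop := by
  have hk0 : (0:ℝ) < k := by exact_mod_cast hk
  set u : ℕ → ℝ := fun J =>
        (((Finset.Icc 1 (2 * 10 ^ J / k)).filter
            (fun n => ∃ j : ℕ, 10 ^ j ≤ k * n ∧ k * n < 2 * 10 ^ j)).card : ℝ)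
          / ((2 * 10 ^ J / k : ℕ) : ℝ) with hu
  set g : ℕ → ℝ := fun J => 5/9 - (1 + 9*k*(J+1))/(18 * 10^J) with hg
  -- g tends to 5/9
  have hgt : Filter.Tendsto g atTop (nhds (5/9 : ℝ)) := by
    have h0 : Filter.Tendsto (fun J : ℕ => (1 + 9*(k:ℝ)*(J+1))/(18 * 10^J)) atTop (nhds 0) := by
      have h1 : Filter.Tendsto (fun J : ℕ => ((J:ℝ)^1) * (1/10:ℝ)^J) atTop (nhds 0) :=
        tendsto_pow_const_mul_const_pow_of_lt_one 1 (by norm_num) (by norm_num)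
      have h2 : Filter.Tendsto (fun J : ℕ => ((1/10:ℝ))^J) atTop (nhds 0) :=
        tendsto_pow_atTop_nhds_zero_of_lt_one (by norm_num) (by norm_num)
      have := ((h1.const_mul ((9*(k:ℝ))/18)).add (h2.const_mul ((1 + 9*(k:ℝ))/18)))
      simp only [mul_zero, add_zero, zero_add] at this
      convert this using 2 with J
      have h10 : (10:ℝ)^J ≠ 0 := by positivity
      simp only [one_div, inv_pow]
      field_simp
      ring
    have := (tendsto_const_nhds : Filter.Tendsto (fun _ : ℕ => (5/9:ℝ)) atTop (nhds (5/9))).sub h0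
    simpa using this
  -- eventually g ≤ u
  have hkey : ∀ᶠ J in atTop, g J ≤ u J := by
    filter_upwards [Filter.eventually_ge_atTop k] with J hJ
    have hkJ : k ≤ 2 * 10^J := le_of_lt <| by
      calc k < 2^k := Nat.lt_two_pow_self
        _ ≤ 10^k := Nat.pow_le_pow_left (by norm_num) k
        _ ≤ 10^J := Nat.pow_le_pow_right (by norm_num) hJ
        _ ≤ 2 * 10^J := by omega
    have hN1 : 1 ≤ 2 * 10^J / k := (Nat.one_le_div_iff (by omega)).2 hkJ
    have hN0 : (0:ℝ) < ((2 * 10^J / k : ℕ) : ℝ) := by exact_mod_cast hN1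
    have hND : ((2 * 10^J / k : ℕ) : ℝ) ≤ 2 * 10^J / (k:ℝ) := by
      rw [le_div_iff₀ hk0]
      have : (2 * 10^J / k) * k ≤ 2 * 10^J := Nat.div_mul_le_self _ _
      exact_mod_cast this
    have hL := card_lower k J hk
    set L : ℝ := ((10:ℝ)^(J+1) - 1)/(9*(k:ℝ)) - (J+1) with hLdef
    have hgL : g J = L / (2 * 10^J / (k:ℝ)) := by
      have h10 : (10:ℝ)^J ≠ 0 := by positivity
      simp only [hg]
      rw [hLdef]
      field_simp
      ring
    rw [hgL]
    by_cases hLpos : 0 ≤ L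
    · calc L / (2 * 10^J / (k:ℝ)) ≤ L / ((2 * 10^J / k : ℕ) : ℝ) :=
            div_le_div_of_nonneg_left hLpos hN0 hND
        _ ≤ u J := by
            rw [hu]
            exact (div_le_div_iff_of_pos_right hN0).2 hL
    · have hneg : L / (2 * 10^J / (k:ℝ)) < 0 := by
        apply div_neg_of_neg_of_pos (by linarith)
        positivity
      have : 0 ≤ u J := by positivity
      linarith
  -- boundedness
  have hub : Filter.IsBoundedUnder (· ≤ ·) atTop u := by
    refine Filter.isBoundedUnder_of ⟨1, fun J => ?_⟩
    rcases Nat.eq_zero_or_pos (2 * 10^J / k) with h | h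
    · simp [hu, h]
    · have hN0 : (0:ℝ) < ((2 * 10^J / k : ℕ) : ℝ) := by exact_mod_cast h
      rw [hu]
      rw [div_le_one hN0]
      have := Finset.card_filter_le (Finset.Icc 1 (2 * 10 ^ J / k))
        (fun n => ∃ j : ℕ, 10 ^ j ≤ k * n ∧ k * n < 2 * 10 ^ j)
      have hc : (Finset.Icc 1 (2 * 10 ^ J / k)).card = 2 * 10 ^ J / k := by
        rw [Nat.card_Icc]; omega
      exact_mod_cast le_trans this (le_of_eq hc)
  have hcb : Filter.IsCoboundedUnder (· ≤ ·) atTop g :=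
    hgt.isBoundedUnder_ge.isCoboundedUnder_le
  calc (5/9 : ℝ) = Filter.limsup g atTop := (hgt.limsup_eq).symm
    _ ≤ Filter.limsup u atTop := Filter.limsup_le_limsup hkey hcb hub
end

section
/- Let f be a strictly increasing polynomial of degree d ≥ 1 with positive leading coefficient c_d, mapping ℕ into ℕ. For J ∈ ℕ, the number of n ∈ ℕ with f(n) ≤ 2·10^J and f(n) having leading decimal digit 1 equals ((2^{1/d} − 1)/c_d^{1/d}) · ∑_{i=1}^{J} 10^{i/d} + O(J). -/
set_option maxHeartbeats 1000000

open scoped Classical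
open Filter Finset

lemma aux_poly_bound (p : Polynomial ℝ) (e : ℕ) (he : p.natDegree ≤ e) (x : ℝ) (hx : 0 ≤ x) :
    |p.eval x| ≤ (∑ i ∈ Finset.range (p.natDegree + 1), |p.coeff i|) * (x + 1) ^ e := by
  rw [Polynomial.eval_eq_sum_range]
  calc |∑ i ∈ Finset.range (p.natDegree + 1), p.coeff i * x ^ i|
      ≤ ∑ i ∈ Finset.range (p.natDegree + 1), |p.coeff i * x ^ i| :=
        Finset.abs_sum_le_sum_abs _ _
    _ ≤ ∑ i ∈ Finset.range (p.natDegree + 1), |p.coeff i| * (x + 1) ^ e := by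
        apply Finset.sum_le_sum
        intro i hi
        rw [abs_mul, abs_pow, abs_of_nonneg hx]
        apply mul_le_mul_of_nonneg_left _ (abs_nonneg _)
        calc x ^ i ≤ (x + 1) ^ i := pow_le_pow_left₀ hx (by linarith) i
          _ ≤ (x + 1) ^ e := pow_le_pow_right₀ (by linarith)
              (le_trans (Nat.lt_succ_iff.mp (Finset.mem_range.mp hi)) he)
    _ = _ := by rw [← Finset.sum_mul]

lemma aux_pow_gap (a b : ℝ) (d : ℕ) (hd : 1 ≤ d) (hb : 0 ≤ b) (hab : b ≤ a) :
    (a - b) * a ^ (d - 1) ≤ a ^ d - b ^ d := by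
  have h1 : b * b ^ (d - 1) ≤ b * a ^ (d - 1) :=
    mul_le_mul_of_nonneg_left (pow_le_pow_left₀ hb hab _) hb
  have h2 : a ^ d = a * a ^ (d - 1) := by
    rw [← pow_succ']; congr 1; omega
  have h3 : b ^ d = b * b ^ (d - 1) := by
    rw [← pow_succ']; congr 1; omega
  rw [sub_mul, h2, h3]; linarith

/-- Let `F : ℕ → ℕ` be a strictly increasing polynomial of degree `d ≥ 1` with
positive leading coefficient `c_d`. Then the number of `n` with
`F n ≤ 2·10^J` and `F n` having leading decimal digit `1` equals
`((2^(1/d) - 1)/c_d^(1/d)) · ∑_{i=1}^{J} 10^(i/d) + O(J)`. -/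
theorem stmt8 (f : Polynomial ℝ) (d : ℕ) (hd : 1 ≤ d) (hdeg : f.natDegree = d)
    (hc : 0 < f.leadingCoeff)
    (F : ℕ → ℕ) (hF : ∀ n : ℕ, (F n : ℝ) = f.eval (n : ℝ)) (hmono : StrictMono F) :
    (fun J : ℕ =>
        (((Finset.range (2 * 10 ^ J + 1)).filter
            (fun n => F n ≤ 2 * 10 ^ J ∧
              ∃ j : ℕ, 10 ^ j ≤ F n ∧ F n < 2 * 10 ^ j)).card : ℝ)
        - ((2 : ℝ) ^ ((1 : ℝ) / d) - 1) / f.leadingCoeff ^ ((1 : ℝ) / d)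
            * ∑ i ∈ Finset.Icc 1 J, (10 : ℝ) ^ ((i : ℝ) / d))
      =O[atTop] (fun J : ℕ => (J : ℝ)) := by
  set c := f.leadingCoeff with hcdef
  have hdne : (d : ℝ) ≠ 0 := Nat.cast_ne_zero.mpr (by omega)
  -- decompose f
  have hsplit : ∀ x : ℝ, f.eval x - c * x ^ d = f.eraseLead.eval x := by
    intro x
    conv_lhs => rw [← f.eraseLead_add_C_mul_X_pow]
    simp [hdeg, hcdef]
  have hpd : f.eraseLead.natDegree ≤ d - 1 := by
    have := f.eraseLead_natDegree_le
    omega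
  obtain ⟨B, hB, hbound⟩ : ∃ B : ℝ, 0 ≤ B ∧
      ∀ x : ℝ, 0 ≤ x → |f.eval x - c * x ^ d| ≤ B * (x + 1) ^ (d - 1) := by
    refine ⟨∑ i ∈ Finset.range (f.eraseLead.natDegree + 1), |f.eraseLead.coeff i|,
      Finset.sum_nonneg fun i _ => abs_nonneg _, fun x hx => ?_⟩
    rw [hsplit x]
    exact aux_poly_bound _ _ hpd x hx
  -- the constant C
  obtain ⟨Cst, hC1, hC2⟩ : ∃ Cst : ℝ, 1 ≤ Cst ∧ B * 2 ^ (d - 1) + 1 ≤ c * Cst := by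
    refine ⟨max 1 ((B * 2 ^ (d - 1) + 1) / c), le_max_left _ _, ?_⟩
    calc B * 2 ^ (d - 1) + 1 = c * ((B * 2 ^ (d - 1) + 1) / c) := by field_simp
      _ ≤ c * max 1 ((B * 2 ^ (d - 1) + 1) / c) :=
          mul_le_mul_of_nonneg_left (le_max_right _ _) hc.le
  have hC0 : (0:ℝ) ≤ Cst := by linarith
  -- inverse function
  set t : ℕ → ℝ := fun m => ((m : ℝ) / c) ^ ((1 : ℝ) / d) with htdef
  have ht0 : ∀ m : ℕ, 0 ≤ t m := fun m => Real.rpow_nonneg (by positivity) _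
  have htpow : ∀ m : ℕ, c * t m ^ d = m := by
    intro m
    have h1 : t m ^ d = (m : ℝ) / c := by
      rw [htdef]
      rw [← Real.rpow_natCast (((m : ℝ) / c) ^ ((1 : ℝ) / d)) d,
        ← Real.rpow_mul (by positivity), one_div_mul_cancel hdne, Real.rpow_one]
    rw [h1, mul_comm, div_mul_cancel₀ _ hc.ne']
  -- claim 1 : if n ≥ t m + C then F n ≥ m
  have claim1 : ∀ m n : ℕ, 1 ≤ n → t m + Cst ≤ (n : ℝ) → (m : ℝ) ≤ (F n : ℝ) := by
    intro m n hn1 hn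
    have hn0 : (1 : ℝ) ≤ (n : ℝ) := by exact_mod_cast hn1
    have htn : t m ≤ (n : ℝ) := by linarith
    have hgap := aux_pow_gap (n : ℝ) (t m) d hd (ht0 m) htn
    have hb := hbound n (by linarith)
    have habs := (abs_le.mp hb).1
    have hpow0 : (0:ℝ) ≤ (n : ℝ) ^ (d - 1) := by positivity
    have h2n : ((n : ℝ) + 1) ^ (d - 1) ≤ 2 ^ (d - 1) * (n : ℝ) ^ (d - 1) := by
      rw [← mul_pow]
      exact pow_le_pow_left₀ (by linarith) (by linarith) _
    have hstep1 : Cst * (n : ℝ) ^ (d - 1) ≤ ((n : ℝ) - t m) * (n : ℝ) ^ (d - 1) :=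
      mul_le_mul_of_nonneg_right (by linarith) hpow0
    have hstep2 : c * (Cst * (n : ℝ) ^ (d - 1)) ≤ c * ((n : ℝ) ^ d - t m ^ d) :=
      mul_le_mul_of_nonneg_left (hstep1.trans hgap) hc.le
    have hstep3 : (B * 2 ^ (d - 1) + 1) * (n : ℝ) ^ (d - 1) ≤ (c * Cst) * (n : ℝ) ^ (d - 1) :=
      mul_le_mul_of_nonneg_right hC2 hpow0
    have hB2 : B * ((n : ℝ) + 1) ^ (d - 1) ≤ B * (2 ^ (d - 1) * (n : ℝ) ^ (d - 1)) :=
      mul_le_mul_of_nonneg_left h2n hB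
    have hm := htpow m
    rw [hF n]
    nlinarith [hstep2, hstep3, hB2, habs, hpow0]
  -- claim 2 : if n ≤ t m - C then F n < m
  have claim2 : ∀ m n : ℕ, (n : ℝ) + Cst ≤ t m → (F n : ℝ) < (m : ℝ) := by
    intro m n hn
    have hn0 : (0:ℝ) ≤ (n : ℝ) := Nat.cast_nonneg n
    have htn : (n : ℝ) ≤ t m := by linarith
    have hgap := aux_pow_gap (t m) (n : ℝ) d hd hn0 htn
    have hb := hbound n hn0
    have habs := (abs_le.mp hb).2
    have hpow1 : (1:ℝ) ≤ ((n : ℝ) + 1) ^ (d - 1) := one_le_pow₀ (by linarith)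
    have hpow0 : (0:ℝ) ≤ ((n : ℝ) + 1) ^ (d - 1) := by linarith
    have h3 : ((n : ℝ) + 1) ^ (d - 1) ≤ (t m) ^ (d - 1) :=
      pow_le_pow_left₀ (by linarith) (by linarith) _
    have hstep1 : Cst * ((n : ℝ) + 1) ^ (d - 1) ≤ (t m - (n : ℝ)) * (t m) ^ (d - 1) := by
      have := mul_le_mul_of_nonneg_left h3 hC0
      have h5 : Cst * (t m) ^ (d - 1) ≤ (t m - (n : ℝ)) * (t m) ^ (d - 1) :=
        mul_le_mul_of_nonneg_right (by linarith) (by positivity)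
      linarith
    have hstep2 : c * (Cst * ((n : ℝ) + 1) ^ (d - 1)) ≤ c * ((t m) ^ d - (n : ℝ) ^ d) :=
      mul_le_mul_of_nonneg_left (hstep1.trans hgap) hc.le
    have hstep3 : (B * 2 ^ (d - 1) + 1) * ((n : ℝ) + 1) ^ (d - 1)
        ≤ (c * Cst) * ((n : ℝ) + 1) ^ (d - 1) :=
      mul_le_mul_of_nonneg_right hC2 hpow0
    have h2pow : (1:ℝ) ≤ 2 ^ (d - 1) := one_le_pow₀ (by norm_num)
    have hBB : B * ((n : ℝ) + 1) ^ (d - 1) ≤ B * 2 ^ (d - 1) * ((n : ℝ) + 1) ^ (d - 1) :=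
      mul_le_mul_of_nonneg_right (le_mul_of_one_le_right hB h2pow) hpow0
    have hm := htpow m
    rw [hF n]
    nlinarith [hstep2, hstep3, hBB, habs, hpow1]
  -- counting bounds
  have count_ub : ∀ M m : ℕ,
      ((((Finset.range M).filter (fun n => F n < m)).card : ℝ)) ≤ t m + Cst + 1 := by
    intro M m
    have hsub : (Finset.range M).filter (fun n => F n < m) ⊆
        Finset.range ⌈t m + Cst⌉₊ := by
      intro n hn
      simp only [Finset.mem_filter, Finset.mem_range] at hn ⊢
      rw [Nat.lt_ceil]
      by_contra h
      push_neg at h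
      have hn1 : 1 ≤ n := by
        rcases Nat.eq_zero_or_pos n with h0 | h0
        · exfalso; rw [h0] at h; push_cast at h; linarith [ht0 m]
        · exact h0
      have := claim1 m n hn1 h
      have h2 : (F n : ℝ) < (m : ℝ) := by exact_mod_cast hn.2
      linarith
    calc ((((Finset.range M).filter (fun n => F n < m)).card : ℝ))
        ≤ (⌈t m + Cst⌉₊ : ℝ) := by
          exact_mod_cast (Finset.card_le_card hsub).trans_eq (Finset.card_range _)
      _ ≤ t m + Cst + 1 := (Nat.ceil_lt_add_one (by linarith [ht0 m])).le
  have count_lb : ∀ M m : ℕ, m ≤ M →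
      t m - Cst ≤ ((((Finset.range M).filter (fun n => F n < m)).card : ℝ)) := by
    intro M m hmM
    rcases le_or_gt (t m - Cst) 0 with h | h
    · exact h.trans (Nat.cast_nonneg _)
    · have hsub : Finset.range (⌊t m - Cst⌋₊ + 1) ⊆
          (Finset.range M).filter (fun n => F n < m) := by
        intro n hn
        simp only [Finset.mem_range, Nat.lt_succ_iff] at hn
        have hn' : (n : ℝ) ≤ t m - Cst := by
          rwa [← Nat.le_floor_iff h.le]
        have hFn : (F n : ℝ) < (m : ℝ) := claim2 m n (by linarith)
        have hFn' : F n < m := by exact_mod_cast hFn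
        simp only [Finset.mem_filter, Finset.mem_range]
        exact ⟨lt_of_le_of_lt hmono.le_apply (lt_of_lt_of_le hFn' hmM), hFn'⟩
      have hcard : ⌊t m - Cst⌋₊ + 1 ≤
          ((Finset.range M).filter (fun n => F n < m)).card := by
        calc ⌊t m - Cst⌋₊ + 1 = (Finset.range (⌊t m - Cst⌋₊ + 1)).card :=
              (Finset.card_range _).symm
          _ ≤ _ := Finset.card_le_card hsub
      have := Nat.lt_floor_add_one (t m - Cst)
      have hcast : ((⌊t m - Cst⌋₊ + 1 : ℕ) : ℝ) ≤
          ((((Finset.range M).filter (fun n => F n < m)).card : ℝ)) := by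
        exact_mod_cast hcard
      push_cast at hcast
      linarith
  -- the constant K and the identity for t
  set K : ℝ := ((2 : ℝ) ^ ((1 : ℝ) / d) - 1) / c ^ ((1 : ℝ) / d) with hKdef
  have ht2 : ∀ j : ℕ, t (2 * 10 ^ j) - t (10 ^ j) = K * (10 : ℝ) ^ ((j : ℝ) / d) := by
    intro j
    have h10 : (0:ℝ) ≤ (10 : ℝ) ^ j := by positivity
    have e1 : ((10 : ℝ) ^ j) ^ ((1 : ℝ) / d) = (10 : ℝ) ^ ((j : ℝ) / d) := by
      rw [← Real.rpow_natCast 10 j, ← Real.rpow_mul (by norm_num), mul_one_div]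
    have e2 : t (10 ^ j) = (10 : ℝ) ^ ((j : ℝ) / d) / c ^ ((1 : ℝ) / d) := by
      rw [htdef]
      push_cast
      rw [Real.div_rpow h10 hc.le, e1]
    have e3 : t (2 * 10 ^ j) = (2 : ℝ) ^ ((1 : ℝ) / d) * ((10 : ℝ) ^ ((j : ℝ) / d) / c ^ ((1 : ℝ) / d)) := by
      rw [htdef]
      push_cast
      rw [show (2 * (10:ℝ) ^ j) / c = 2 * ((10:ℝ) ^ j / c) by ring,
        Real.mul_rpow (by norm_num) (by positivity), Real.div_rpow h10 hc.le, e1]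
    rw [e2, e3, hKdef]
    ring
  -- now the main estimate
  rw [Asymptotics.isBigO_iff]
  refine ⟨2 * (2 * Cst + 2) + |K|, ?_⟩
  filter_upwards [Filter.eventually_ge_atTop 1] with J hJ
  set M : ℕ := 2 * 10 ^ J + 1 with hMdef
  set S : ℕ → Finset ℕ := fun j =>
    (Finset.range M).filter (fun n => 10 ^ j ≤ F n ∧ F n < 2 * 10 ^ j) with hSdef
  -- decomposition of the main set
  have hTset : (Finset.range M).filter
      (fun n => F n ≤ 2 * 10 ^ J ∧ ∃ j : ℕ, 10 ^ j ≤ F n ∧ F n < 2 * 10 ^ j)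
      = (Finset.range (J + 1)).biUnion S := by
    ext n
    simp only [Finset.mem_filter, Finset.mem_biUnion, Finset.mem_range, hSdef]
    constructor
    · rintro ⟨hnM, hle, j, hj1, hj2⟩
      refine ⟨j, ?_, hnM, hj1, hj2⟩
      by_contra hgt
      push_neg at hgt
      have h1 : 10 ^ (J + 1) ≤ 10 ^ j := Nat.pow_le_pow_right (by norm_num) hgt
      have h2 : 2 * 10 ^ J < 10 ^ (J + 1) := by
        rw [pow_succ, mul_comm (10 ^ J) 10]
        have : 0 < 10 ^ J := Nat.pow_pos (by norm_num)
        nlinarith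
      have := lt_of_le_of_lt hle h2
      have := lt_of_lt_of_le this h1
      exact absurd (lt_of_le_of_lt hj1 this) (lt_irrefl _)
    · rintro ⟨j, hjJ, hnM, hj1, hj2⟩
      have hle10 : (10:ℕ) ^ j ≤ 10 ^ J := Nat.pow_le_pow_right (by norm_num) (Nat.lt_succ_iff.mp hjJ)
      exact ⟨hnM, le_trans hj2.le (Nat.mul_le_mul_left 2 hle10), j, hj1, hj2⟩
  have hdisj : ∀ i j : ℕ, i < j → Disjoint (S i) (S j) := by
    intro i j hij
    rw [Finset.disjoint_left]
    intro n hni hnj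
    simp only [hSdef, Finset.mem_filter] at hni hnj
    have h1 : 2 * 10 ^ i ≤ 10 ^ (i + 1) := by
      rw [pow_succ, mul_comm (10 ^ i) 10]
      exact Nat.mul_le_mul_right _ (by norm_num)
    have h2 : (10:ℕ) ^ (i + 1) ≤ 10 ^ j := Nat.pow_le_pow_right (by norm_num) hij
    have : F n < F n :=
      lt_of_lt_of_le hni.2.2 (le_trans (le_trans h1 h2) hnj.2.1)
    exact absurd this (lt_irrefl _)
  have hcardT : ((Finset.range M).filter
      (fun n => F n ≤ 2 * 10 ^ J ∧ ∃ j : ℕ, 10 ^ j ≤ F n ∧ F n < 2 * 10 ^ j)).card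
      = ∑ j ∈ Finset.range (J + 1), (S j).card := by
    rw [hTset]
    apply Finset.card_biUnion
    intro x _ y _ hxy
    rcases hxy.lt_or_gt with h | h
    · exact hdisj _ _ h
    · exact (hdisj _ _ h).symm
  -- card of S j
  have hScard : ∀ j : ℕ, ((S j).card : ℝ)
      = (((Finset.range M).filter (fun n => F n < 2 * 10 ^ j)).card : ℝ)
        - (((Finset.range M).filter (fun n => F n < 10 ^ j)).card : ℝ) := by
    intro j
    have hpart := Finset.card_filter_add_card_filter_not
      (s := (Finset.range M).filter (fun n => F n < 2 * 10 ^ j))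
      (p := fun n => 10 ^ j ≤ F n)
    rw [Finset.filter_filter, Finset.filter_filter] at hpart
    have e1 : (Finset.range M).filter (fun n => F n < 2 * 10 ^ j ∧ 10 ^ j ≤ F n) = S j := by
      rw [hSdef]
      apply Finset.filter_congr
      intro n _
      exact and_comm
    have e2 : (Finset.range M).filter (fun n => F n < 2 * 10 ^ j ∧ ¬ 10 ^ j ≤ F n)
        = (Finset.range M).filter (fun n => F n < 10 ^ j) := by
      apply Finset.filter_congr
      intro n _
      constructor
      · rintro ⟨_, h2⟩; exact Nat.lt_of_not_le h2
      · intro h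
        refine ⟨lt_of_lt_of_le h (Nat.le_mul_of_pos_left _ (by norm_num)), Nat.not_le.mpr h⟩
    rw [e1, e2] at hpart
    have : ((S j).card : ℝ) + (((Finset.range M).filter (fun n => F n < 10 ^ j)).card : ℝ)
        = (((Finset.range M).filter (fun n => F n < 2 * 10 ^ j)).card : ℝ) := by
      exact_mod_cast hpart
    linarith
  -- bound on each S j
  have hSbound : ∀ j : ℕ, j ≤ J →
      |((S j).card : ℝ) - K * (10 : ℝ) ^ ((j : ℝ) / d)| ≤ 2 * Cst + 2 := by
    intro j hj
    have hm1 : (10:ℕ) ^ j ≤ M := by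
      have : (10:ℕ) ^ j ≤ 10 ^ J := Nat.pow_le_pow_right (by norm_num) hj
      omega
    have hm2 : 2 * (10:ℕ) ^ j ≤ M := by
      have : (10:ℕ) ^ j ≤ 10 ^ J := Nat.pow_le_pow_right (by norm_num) hj
      omega
    have u1 := count_ub M (2 * 10 ^ j)
    have u2 := count_lb M (2 * 10 ^ j) hm2
    have u3 := count_ub M (10 ^ j)
    have u4 := count_lb M (10 ^ j) hm1
    rw [hScard j, ← ht2 j, abs_le]
    constructor <;> linarith
  -- final assembly
  have hsum_split : Finset.range (J + 1) = insert 0 (Finset.Icc 1 J) := by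
    ext k
    simp only [Finset.mem_range, Finset.mem_insert, Finset.mem_Icc]
    omega
  have h0not : (0:ℕ) ∉ Finset.Icc 1 J := by simp
  have hKsum : ∑ j ∈ Finset.range (J + 1), K * (10 : ℝ) ^ ((j : ℝ) / d)
      = K + K * ∑ i ∈ Finset.Icc 1 J, (10 : ℝ) ^ ((i : ℝ) / d) := by
    rw [hsum_split, Finset.sum_insert h0not, Finset.mul_sum]
    norm_num
  have hDsum : (((Finset.range M).filter
      (fun n => F n ≤ 2 * 10 ^ J ∧ ∃ j : ℕ, 10 ^ j ≤ F n ∧ F n < 2 * 10 ^ j)).card : ℝ)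
      - K * ∑ i ∈ Finset.Icc 1 J, (10 : ℝ) ^ ((i : ℝ) / d)
      = (∑ j ∈ Finset.range (J + 1), (((S j).card : ℝ) - K * (10 : ℝ) ^ ((j : ℝ) / d))) + K := by
    rw [hcardT, Finset.sum_sub_distrib, hKsum]
    push_cast
    ring
  have habs_sum : |∑ j ∈ Finset.range (J + 1), (((S j).card : ℝ) - K * (10 : ℝ) ^ ((j : ℝ) / d))|
      ≤ (J + 1 : ℝ) * (2 * Cst + 2) := by
    calc |∑ j ∈ Finset.range (J + 1), (((S j).card : ℝ) - K * (10 : ℝ) ^ ((j : ℝ) / d))|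
        ≤ ∑ j ∈ Finset.range (J + 1), |((S j).card : ℝ) - K * (10 : ℝ) ^ ((j : ℝ) / d)| :=
          Finset.abs_sum_le_sum_abs _ _
      _ ≤ ∑ _j ∈ Finset.range (J + 1), (2 * Cst + 2) := by
          apply Finset.sum_le_sum
          intro j hj
          exact hSbound j (Nat.lt_succ_iff.mp (Finset.mem_range.mp hj))
      _ = (J + 1 : ℝ) * (2 * Cst + 2) := by
          rw [Finset.sum_const, Finset.card_range]
          push_cast
          ring
  rw [Real.norm_eq_abs, Real.norm_eq_abs, hDsum]
  have hJ1 : (1:ℝ) ≤ (J:ℝ) := by exact_mod_cast hJ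
  have habs : |(∑ j ∈ Finset.range (J + 1), (((S j).card : ℝ) - K * (10 : ℝ) ^ ((j : ℝ) / d))) + K|
      ≤ (J + 1 : ℝ) * (2 * Cst + 2) + |K| := by
    calc _ ≤ |∑ j ∈ Finset.range (J + 1), (((S j).card : ℝ) - K * (10 : ℝ) ^ ((j : ℝ) / d))| + |K| :=
          abs_add_le _ _
      _ ≤ _ := by linarith
  rw [abs_of_nonneg (by linarith : (0:ℝ) ≤ (J:ℝ))]
  have h1 : ((J:ℝ) + 1) * (2 * Cst + 2) ≤ 2 * (2 * Cst + 2) * (J:ℝ) := by nlinarith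
  have h2 : |K| ≤ |K| * (J:ℝ) := le_mul_of_one_le_right (abs_nonneg _) hJ1
  calc |(∑ j ∈ Finset.range (J + 1), (((S j).card : ℝ) - K * (10 : ℝ) ^ ((j : ℝ) / d))) + K|
      ≤ ((J:ℝ) + 1) * (2 * Cst + 2) + |K| := habs
    _ ≤ 2 * (2 * Cst + 2) * (J:ℝ) + |K| * (J:ℝ) := by linarith
    _ = (2 * (2 * Cst + 2) + |K|) * (J:ℝ) := by ring
end

section
/- Let f: ℕ → ℕ be a non-constant polynomial with positive leading coefficient c_d and degree d ≥ 1. Then limsup_{J→∞} #{n ≤ N_J : f(n) has leading decimal digit 1} / N_J ≥ 5^{1/d}(2^{1/d} − 1) / (2(10^{1/d} − 1)), where N_J = max{n : f(n) ≤ 2·10^J}. -/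
open scoped Classical
open Filter

namespace Stmt9Aux2

noncomputable def g (F : ℕ → ℕ) (x : ℕ) : ℕ := Nat.findGreatest (fun n => F n ≤ x) x

variable {F : ℕ → ℕ}

lemma le_F (hmono : StrictMono F) (n : ℕ) : n ≤ F n := hmono.le_apply

lemma g_iff (hmono : StrictMono F) {x n : ℕ} (hn : 1 ≤ n) : F n ≤ x ↔ n ≤ g F x := by
  constructor
  · intro h
    exact Nat.le_findGreatest (le_trans (le_F hmono n) h) h
  · intro h
    have hg : g F x ≠ 0 := by omega
    have hs : F (g F x) ≤ x := Nat.findGreatest_of_ne_zero (P := fun n => F n ≤ x) rfl hg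
    exact le_trans (hmono.monotone h) hs

lemma g_mono {x y : ℕ} (hxy : x ≤ y) : g F x ≤ g F y :=
  Nat.findGreatest_mono (fun n h => le_trans h hxy) hxy

lemma g_tendsto (hmono : StrictMono F) : Tendsto (g F) atTop atTop := by
  rw [tendsto_atTop]
  intro b
  rcases Nat.eq_zero_or_pos b with rfl | hb
  · exact Eventually.of_forall fun _ => Nat.zero_le _
  · filter_upwards [eventually_ge_atTop (F b)] with x hx
    exact ((g_iff hmono hb).mp hx)

lemma F_asymp (f : Polynomial ℝ) (d : ℕ) (hd : 1 ≤ d) (hdeg : f.natDegree = d)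
    (hc : 0 < f.leadingCoeff) (hF : ∀ n : ℕ, (F n : ℝ) = f.eval (n : ℝ)) :
    Tendsto (fun n : ℕ => (F n : ℝ) / (f.leadingCoeff * (n : ℝ) ^ d)) atTop (nhds 1) := by
  have h := f.isEquivalent_atTop_lead
  rw [Asymptotics.isEquivalent_iff_tendsto_one ?hz] at h
  case hz =>
    filter_upwards [eventually_gt_atTop (0 : ℝ)] with x hx
    have : (0:ℝ) < f.leadingCoeff * x ^ f.natDegree := by positivity
    exact ne_of_gt this
  have h2 := h.comp (tendsto_natCast_atTop_atTop (R := ℝ))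
  refine h2.congr fun n => ?_
  simp [Function.comp, hF n, hdeg, Pi.div_apply]

lemma gA (f : Polynomial ℝ) (d : ℕ) (hd : 1 ≤ d) (hdeg : f.natDegree = d)
    (hc : 0 < f.leadingCoeff) (hF : ∀ n : ℕ, (F n : ℝ) = f.eval (n : ℝ))
    (hmono : StrictMono F) :
    Tendsto (fun x : ℕ => ((g F x : ℝ)) ^ d * f.leadingCoeff / (x : ℝ)) atTop (nhds 1) := by
  set c := f.leadingCoeff with hcdef
  set φ : ℕ → ℝ := fun n => (F n : ℝ) / (c * (n : ℝ) ^ d) with hφdef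
  have hφ : Tendsto φ atTop (nhds 1) := F_asymp f d hd hdeg hc hF
  have hgt : Tendsto (g F) atTop atTop := g_tendsto hmono
  have hgt' : Tendsto (fun x => g F x + 1) atTop atTop :=
    tendsto_atTop_mono (fun x => Nat.le_succ (g F x)) hgt
  have h1 : Tendsto (fun x => φ (g F x)) atTop (nhds 1) := hφ.comp hgt
  have h2 : Tendsto (fun x => φ (g F x + 1)) atTop (nhds 1) := hφ.comp hgt'
  have h3 : Tendsto (fun x => (g F x : ℝ) / ((g F x : ℝ) + 1)) atTop (nhds 1) :=
    (tendsto_natCast_div_add_atTop (1 : ℝ)).comp hgt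
  have hup : Tendsto (fun x => 1 / φ (g F x)) atTop (nhds 1) := by
    have := h1.inv₀ one_ne_zero
    simpa [one_div] using this
  have hlo : Tendsto (fun x => ((g F x : ℝ) / ((g F x : ℝ) + 1)) ^ d / φ (g F x + 1))
      atTop (nhds 1) := by
    have := (h3.pow d).div h2 one_ne_zero
    rw [one_pow, div_one] at this
    exact this
  refine tendsto_of_tendsto_of_tendsto_of_le_of_le' hlo hup ?_ ?_
  · -- lower bound : lo x ≤ t x
    filter_upwards [hgt.eventually_ge_atTop 1] with x hgx
    have hg1 : (1:ℕ) ≤ g F x := hgx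
    have hx : 1 ≤ x := le_trans hg1 (Nat.findGreatest_le x)
    have hFlt : x < F (g F x + 1) := by
      by_contra hcon
      push_neg at hcon
      have := (g_iff hmono (by omega : 1 ≤ g F x + 1)).mp hcon
      omega
    have hgR : (0:ℝ) < (g F x : ℝ) := by exact_mod_cast hg1
    have hgR1 : (0:ℝ) < (g F x : ℝ) + 1 := by linarith
    have hFp : (0:ℝ) < (F (g F x + 1) : ℝ) := by
      exact_mod_cast (by omega : 0 < F (g F x + 1))
    have hxR : (0:ℝ) < (x:ℝ) := by exact_mod_cast hx
    have hxF : (x:ℝ) ≤ (F (g F x + 1) : ℝ) := by exact_mod_cast hFlt.le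
    have key : ((g F x : ℝ) / ((g F x : ℝ) + 1)) ^ d / φ (g F x + 1)
        = (g F x : ℝ) ^ d * c / (F (g F x + 1) : ℝ) := by
      simp only [hφdef]
      push_cast
      rw [div_pow]
      field_simp
    rw [key]
    gcongr
  · -- upper bound : t x ≤ up x
    filter_upwards [hgt.eventually_ge_atTop 1] with x hgx
    have hg1 : (1:ℕ) ≤ g F x := hgx
    have hg0 : g F x ≠ 0 := by omega
    have hFle : F (g F x) ≤ x := Nat.findGreatest_of_ne_zero (P := fun n => F n ≤ x) rfl hg0
    have hgR : (0:ℝ) < (g F x : ℝ) := by exact_mod_cast hg1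
    have hFp : (0:ℝ) < (F (g F x) : ℝ) := by
      have := le_F hmono (g F x)
      exact_mod_cast (by omega : 0 < F (g F x))
    have hFx : (F (g F x) : ℝ) ≤ (x:ℝ) := by exact_mod_cast hFle
    have key : (1:ℝ) / φ (g F x) = (g F x : ℝ) ^ d * c / (F (g F x) : ℝ) := by
      simp only [hφdef]
      field_simp
    rw [key]
    gcongr


lemma gB (f : Polynomial ℝ) (d : ℕ) (hd : 1 ≤ d) (hdeg : f.natDegree = d)
    (hc : 0 < f.leadingCoeff) (hF : ∀ n : ℕ, (F n : ℝ) = f.eval (n : ℝ))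
    (hmono : StrictMono F) (x y : ℕ → ℕ) (hx : Tendsto x atTop atTop)
    (hy : Tendsto y atTop atTop) (ρ : ℝ)
    (hr : Tendsto (fun J => (y J : ℝ) / (x J : ℝ)) atTop (nhds ρ)) :
    Tendsto (fun J => (g F (y J) : ℝ) / (g F (x J) : ℝ)) atTop
      (nhds (ρ ^ ((1:ℝ)/d))) := by
  have hA := gA f d hd hdeg hc hF hmono
  have hAy := hA.comp hy
  have hAx := hA.comp hx
  have hAxi := hAx.inv₀ one_ne_zero
  have hgx := (g_tendsto hmono).comp hx
  have hq : Tendsto (fun J => ((g F (y J) : ℝ) / (g F (x J) : ℝ)) ^ d) atTop (nhds ρ) := by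
    have hprod := (hAy.mul hr).mul hAxi
    rw [show (1:ℝ) * ρ * 1⁻¹ = ρ by ring] at hprod
    refine hprod.congr' ?_
    filter_upwards [hx.eventually_ge_atTop 1, hy.eventually_ge_atTop 1,
      hgx.eventually_ge_atTop 1] with J h1 h2 h3
    have hc0 : f.leadingCoeff ≠ 0 := ne_of_gt hc
    have hxR : ((x J : ℕ):ℝ) ≠ 0 := by
      have : (0:ℕ) < x J := h1
      positivity
    have hyR : ((y J : ℕ):ℝ) ≠ 0 := by
      have : (0:ℕ) < y J := h2
      positivity
    have hgxR : ((g F (x J) : ℕ):ℝ) ≠ 0 := by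
      have : (0:ℕ) < g F (x J) := h3
      positivity
    simp only [Function.comp]
    rw [div_pow]
    field_simp
  have key : ∀ t : ℝ, 0 ≤ t → (t ^ d) ^ ((1:ℝ)/d) = t := by
    intro t ht
    rw [← Real.rpow_natCast t d, ← Real.rpow_mul ht, mul_one_div,
      div_self (by exact_mod_cast (by omega : d ≠ 0) : (d:ℝ) ≠ 0), Real.rpow_one]
  have h2 := hq.rpow_const (Or.inr (by positivity : (0:ℝ) ≤ 1/d))
  exact h2.congr fun J => key _ (by positivity)


lemma tendsto_pow_sub_atTop (a i : ℕ) (ha : 0 < a) :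
    Tendsto (fun J => a * 10 ^ (J - i) - 1) atTop atTop := by
  rw [tendsto_atTop]
  intro b
  filter_upwards [eventually_ge_atTop (i + b + 1)] with J hJ
  have h1 : J - i < 10 ^ (J - i) := Nat.lt_pow_self (by norm_num)
  have h2 : 10 ^ (J - i) ≤ a * 10 ^ (J - i) := Nat.le_mul_of_pos_left _ ha
  omega

lemma aux_ratio (a : ℕ) (ha : 0 < a) (i : ℕ) :
    Tendsto (fun J : ℕ => ((a * 10 ^ (J - i) - 1 : ℕ) : ℝ) / ((2 * 10 ^ J : ℕ) : ℝ))
      atTop (nhds ((a : ℝ) / 2 * (1/10) ^ i)) := by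
  have hbase : Tendsto (fun J : ℕ => 1 / (2 * (10:ℝ) ^ J)) atTop (nhds 0) := by
    apply Tendsto.div_atTop tendsto_const_nhds
    exact (tendsto_pow_atTop_atTop_of_one_lt (by norm_num : (1:ℝ) < 10)).const_mul_atTop
      (by norm_num)
  have h := (tendsto_const_nhds (x := (a:ℝ)/2 * (1/10)^i) (f := atTop (α := ℕ))).sub hbase
  rw [sub_zero] at h
  refine h.congr' ?_
  filter_upwards [eventually_ge_atTop i] with J hJ
  obtain ⟨m, rfl⟩ : ∃ m, J = m + i := ⟨J - i, by omega⟩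
  have hsub : m + i - i = m := by omega
  have h1 : 1 ≤ a * 10 ^ m := by
    have : 0 < a * 10 ^ m := Nat.mul_pos ha (Nat.pow_pos (by norm_num))
    omega
  rw [hsub]
  have hcast : ((a * 10 ^ m - 1 : ℕ) : ℝ) = (a : ℝ) * 10 ^ m - 1 := by
    push_cast [Nat.cast_sub h1]
    ring
  rw [hcast]
  push_cast
  rw [pow_add]
  have h10 : ((10:ℝ) ^ m) ≠ 0 := by positivity
  rw [one_div_pow]
  field_simp

lemma count_ge (hmono : StrictMono F) (k J : ℕ) (hk : k ≤ J) :
    (Finset.range k).sum (fun i => g F (2 * 10 ^ (J - i) - 1) - g F (10 ^ (J - i) - 1))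
      ≤ (((Finset.Icc 1 (g F (2 * 10 ^ J))).filter
          (fun n => ∃ j : ℕ, 10 ^ j ≤ F n ∧ F n < 2 * 10 ^ j)).card) := by
  classical
  set S : ℕ → Finset ℕ := fun i => Finset.Ioc (g F (10 ^ (J - i) - 1)) (g F (2 * 10 ^ (J - i) - 1))
    with hS
  have hsub : ∀ i ∈ Finset.range k, S i ⊆ (Finset.Icc 1 (g F (2 * 10 ^ J))).filter
      (fun n => ∃ j : ℕ, 10 ^ j ≤ F n ∧ F n < 2 * 10 ^ j) := by
    intro i hi n hn
    rw [hS, Finset.mem_Ioc] at hn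
    have hn1 : 1 ≤ n := by omega
    have hFn2 : F n ≤ 2 * 10 ^ (J - i) - 1 := (g_iff hmono hn1).mpr hn.2
    have hFn1 : ¬ (F n ≤ 10 ^ (J - i) - 1) := by
      intro hcon
      have := (g_iff hmono hn1).mp hcon
      omega
    have hp : 0 < 10 ^ (J - i) := Nat.pow_pos (by norm_num)
    have hple : 10 ^ (J - i) ≤ 10 ^ J := Nat.pow_le_pow_right (by norm_num) (by omega)
    have hFN : F n ≤ 2 * 10 ^ J := by omega
    rw [Finset.mem_filter, Finset.mem_Icc]
    refine ⟨⟨hn1, (g_iff hmono hn1).mp hFN⟩, J - i, by omega, by omega⟩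
  have hdisj : ∀ i ∈ Finset.range k, ∀ i' ∈ Finset.range k, i ≠ i' →
      Disjoint (S i) (S i') := by
    have key : ∀ i i', i' < i → i ≤ J → Disjoint (S i) (S i') := by
      intro i i' hii hiJ
      rw [Finset.disjoint_left]
      intro n hn hn'
      rw [hS, Finset.mem_Ioc] at hn hn'
      -- J - i < J - i'
      have hle : 2 * 10 ^ (J - i) - 1 ≤ 10 ^ (J - i') - 1 := by
        have h1 : J - i + 1 ≤ J - i' := by omega
        have h2 : 2 * 10 ^ (J - i) ≤ 10 ^ (J - i + 1) := by
          rw [pow_succ]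
          have : 0 < 10 ^ (J - i) := Nat.pow_pos (by norm_num)
          omega
        have h3 : (10:ℕ) ^ (J - i + 1) ≤ 10 ^ (J - i') := Nat.pow_le_pow_right (by norm_num) h1
        omega
      have := g_mono (F := F) hle
      omega
    intro i hi i' hi' hne
    rw [Finset.mem_range] at hi hi'
    rcases Nat.lt_or_ge i' i with h | h
    · exact key i i' h (by omega)
    · exact (key i' i (by omega) (by omega)).symm
  calc (Finset.range k).sum (fun i => g F (2 * 10 ^ (J - i) - 1) - g F (10 ^ (J - i) - 1))
      = (Finset.range k).sum (fun i => (S i).card) := by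
        refine Finset.sum_congr rfl fun i _ => ?_
        rw [hS, Nat.card_Ioc]
    _ = ((Finset.range k).biUnion S).card := (Finset.card_biUnion hdisj).symm
    _ ≤ _ := Finset.card_le_card (Finset.biUnion_subset.mpr hsub)


lemma const_lemma (d : ℕ) (hd : 1 ≤ d) :
    ∃ k : ℕ, (5:ℝ) ^ ((1:ℝ)/d) * ((2:ℝ) ^ ((1:ℝ)/d) - 1) / (2 * ((10:ℝ) ^ ((1:ℝ)/d) - 1))
      < (Finset.range k).sum
          (fun i => (1 - (1/2:ℝ) ^ ((1:ℝ)/d)) * ((1/10:ℝ) ^ ((1:ℝ)/d)) ^ i) := by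
  have hd0 : (0:ℝ) < (d:ℝ) := by exact_mod_cast hd
  set p : ℝ := (1:ℝ)/d with hp
  have hp0 : 0 < p := by rw [hp]; positivity
  set a : ℝ := (2:ℝ) ^ p with hA
  set b : ℝ := (10:ℝ) ^ p with hB
  set e : ℝ := (5:ℝ) ^ p with hE
  have ha : 1 < a := (Real.one_lt_rpow_iff_of_pos (by norm_num)).mpr
    (Or.inl ⟨by norm_num, hp0⟩)
  have hb : 1 < b := (Real.one_lt_rpow_iff_of_pos (by norm_num)).mpr
    (Or.inl ⟨by norm_num, hp0⟩)
  have he : 0 < e := Real.rpow_pos_of_pos (by norm_num) _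
  have hba : b = e * a := by
    rw [hE, hA, ← Real.mul_rpow (by norm_num) (by norm_num)]
    norm_num
    exact hB
  have hs : (1/2:ℝ) ^ p = a⁻¹ := by
    rw [show (1/2:ℝ) = 2⁻¹ by norm_num, Real.inv_rpow (by norm_num)]
  have hrr : (1/10:ℝ) ^ p = b⁻¹ := by
    rw [show (1/10:ℝ) = 10⁻¹ by norm_num, Real.inv_rpow (by norm_num)]
  have hr0 : (0:ℝ) ≤ b⁻¹ := by positivity
  have hr1 : b⁻¹ < 1 := inv_lt_one_of_one_lt₀ hb
  have hsum : HasSum (fun i : ℕ => (1 - a⁻¹) * b⁻¹ ^ i) ((1 - a⁻¹) * (1 - b⁻¹)⁻¹) :=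
    (hasSum_geometric_of_lt_one hr0 hr1).mul_left _
  have htends := hsum.tendsto_sum_nat
  have ha0 : a ≠ 0 := by positivity
  have he0 : e ≠ 0 := ne_of_gt he
  have hea1 : e * a - 1 ≠ 0 := by
    have : 1 < e * a := by rw [← hba]; exact hb
    intro h; nlinarith
  have hb1 : b - 1 ≠ 0 := by intro h; nlinarith
  have hid : (1 - a⁻¹) * (1 - b⁻¹)⁻¹ = e * (a - 1) / (b - 1) := by
    rw [hba]
    field_simp
  have hC : e * (a - 1) / (2 * (b - 1)) < (1 - a⁻¹) * (1 - b⁻¹)⁻¹ := by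
    rw [hid]
    have h1 : 0 < e * (a - 1) := by nlinarith
    have h2 : 0 < b - 1 := by nlinarith
    rw [div_lt_div_iff₀ (by nlinarith) h2]
    nlinarith
  obtain ⟨k, hk⟩ := (htends.eventually (eventually_gt_nhds hC)).exists
  refine ⟨k, ?_⟩
  have : (fun i : ℕ => (1 - (1/2:ℝ) ^ p) * ((1/10:ℝ) ^ p) ^ i)
      = fun i : ℕ => (1 - a⁻¹) * b⁻¹ ^ i := by
    funext i; rw [hs, hrr]
  rw [this]
  exact hk

end Stmt9Aux2

open Stmt9Aux2 in
theorem stmt9' (f : Polynomial ℝ) (d : ℕ) (hd : 1 ≤ d) (hdeg : f.natDegree = d)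
    (hc : 0 < f.leadingCoeff)
    (F : ℕ → ℕ) (hF : ∀ n : ℕ, (F n : ℝ) = f.eval (n : ℝ)) (hmono : StrictMono F) :
    (5 : ℝ) ^ ((1 : ℝ) / d) * ((2 : ℝ) ^ ((1 : ℝ) / d) - 1)
        / (2 * ((10 : ℝ) ^ ((1 : ℝ) / d) - 1))
      ≤ Filter.limsup (fun J : ℕ =>
          (((Finset.Icc 1 (Nat.findGreatest (fun n => F n ≤ 2 * 10 ^ J) (2 * 10 ^ J))).filter
              (fun n => ∃ j : ℕ, 10 ^ j ≤ F n ∧ F n < 2 * 10 ^ j)).card : ℝ)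
            / (Nat.findGreatest (fun n => F n ≤ 2 * 10 ^ J) (2 * 10 ^ J) : ℝ))
        Filter.atTop := by
  have hNeq : ∀ J : ℕ, Nat.findGreatest (fun n => F n ≤ 2 * 10 ^ J) (2 * 10 ^ J)
      = g F (2 * 10 ^ J) := fun J => rfl
  simp only [hNeq]
  set u : ℕ → ℝ := fun J =>
    (((Finset.Icc 1 (g F (2 * 10 ^ J))).filter
        (fun n => ∃ j : ℕ, 10 ^ j ≤ F n ∧ F n < 2 * 10 ^ j)).card : ℝ)
      / (g F (2 * 10 ^ J) : ℝ) with hu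
  have hbdd : Filter.IsBoundedUnder (· ≤ ·) atTop u := by
    refine isBoundedUnder_of ⟨1, fun J => ?_⟩
    have hcard : (((Finset.Icc 1 (g F (2 * 10 ^ J))).filter
        (fun n => ∃ j : ℕ, 10 ^ j ≤ F n ∧ F n < 2 * 10 ^ j)).card) ≤ g F (2 * 10 ^ J) := by
      calc _ ≤ (Finset.Icc 1 (g F (2 * 10 ^ J))).card := Finset.card_filter_le _ _
        _ = g F (2 * 10 ^ J) := by rw [Nat.card_Icc]; omega
    rcases Nat.eq_zero_or_pos (g F (2 * 10 ^ J)) with h0 | h0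
    · simp only [hu, h0]
      norm_num
    · simp only [hu]
      rw [div_le_one (by exact_mod_cast h0)]
      exact_mod_cast hcard
  refine Filter.le_limsup_of_frequently_le ?_ hbdd
  obtain ⟨k, hk⟩ := const_lemma d hd
  have hxT : Tendsto (fun J : ℕ => 2 * 10 ^ J) atTop atTop := by
    apply tendsto_atTop_mono (fun J => ?_) tendsto_id
    have := Nat.lt_pow_self (by norm_num : 1 < 10) (n := J)
    simp only [id]
    omega
  have hNT : Tendsto (fun J => g F (2 * 10 ^ J)) atTop atTop := (g_tendsto hmono).comp hxT
  -- limits of individual terms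
  have hterm : ∀ i : ℕ, Tendsto (fun J =>
      ((g F (2 * 10 ^ (J - i) - 1) : ℝ) - (g F (10 ^ (J - i) - 1) : ℝ))
        / (g F (2 * 10 ^ J) : ℝ)) atTop
      (nhds ((1 - (1/2:ℝ) ^ ((1:ℝ)/d)) * ((1/10:ℝ) ^ ((1:ℝ)/d)) ^ i)) := by
    intro i
    have h2 := gB f d hd hdeg hc hF hmono (fun J => 2 * 10 ^ J)
      (fun J => 2 * 10 ^ (J - i) - 1) hxT (tendsto_pow_sub_atTop 2 i (by norm_num)) _
      (aux_ratio 2 (by norm_num) i)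
    have h1 := gB f d hd hdeg hc hF hmono (fun J => 2 * 10 ^ J)
      (fun J => 10 ^ (J - i) - 1) hxT
      (by simpa using tendsto_pow_sub_atTop 1 i (by norm_num)) _
      (by simpa using aux_ratio 1 (by norm_num) i)
    have hsub := h2.sub h1
    have hval : (((2:ℕ):ℝ)/2 * (1/10:ℝ)^i) ^ ((1:ℝ)/d) - ((2:ℝ)⁻¹ * ((10:ℝ)^i)⁻¹) ^ ((1:ℝ)/d)
        = (1 - (1/2:ℝ) ^ ((1:ℝ)/d)) * ((1/10:ℝ) ^ ((1:ℝ)/d)) ^ i := by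
      have e1 : (((2:ℕ):ℝ)/2 * (1/10:ℝ)^i) = (1/10:ℝ)^i := by norm_num
      have e2 : ((2:ℝ)⁻¹ * ((10:ℝ)^i)⁻¹) = (1/2:ℝ) * (1/10:ℝ)^i := by
        rw [one_div, div_pow, one_pow, one_div]
      rw [e1, e2, Real.mul_rpow (by norm_num) (by positivity)]
      have e3 : ((1/10:ℝ)^i) ^ ((1:ℝ)/d) = ((1/10:ℝ) ^ ((1:ℝ)/d)) ^ i := by
        rw [← Real.rpow_natCast (1/10:ℝ) i, ← Real.rpow_mul (by norm_num), mul_comm,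
          Real.rpow_mul (by norm_num), Real.rpow_natCast]
      rw [e3]
      ring
    rw [hval] at hsub
    refine hsub.congr fun J => ?_
    rw [sub_div]
  have hL : Tendsto (fun J => (Finset.range k).sum (fun i =>
      ((g F (2 * 10 ^ (J - i) - 1) : ℝ) - (g F (10 ^ (J - i) - 1) : ℝ))
        / (g F (2 * 10 ^ J) : ℝ))) atTop
      (nhds ((Finset.range k).sum
        (fun i => (1 - (1/2:ℝ) ^ ((1:ℝ)/d)) * ((1/10:ℝ) ^ ((1:ℝ)/d)) ^ i))) :=
    tendsto_finset_sum _ fun i _ => hterm i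
  have hev1 := hL.eventually (eventually_gt_nhds hk)
  have hev2 : ∀ᶠ J in atTop, (Finset.range k).sum (fun i =>
      ((g F (2 * 10 ^ (J - i) - 1) : ℝ) - (g F (10 ^ (J - i) - 1) : ℝ))
        / (g F (2 * 10 ^ J) : ℝ)) ≤ u J := by
    filter_upwards [eventually_ge_atTop k, hNT.eventually_ge_atTop 1] with J hJk hN1
    have hcount := count_ge (F := F) hmono k J hJk
    have hgm : ∀ i : ℕ, g F (10 ^ (J - i) - 1) ≤ g F (2 * 10 ^ (J - i) - 1) := by
      intro i
      apply g_mono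
      have : 0 < 10 ^ (J - i) := Nat.pow_pos (by norm_num)
      omega
    have hLs : (Finset.range k).sum (fun i =>
        ((g F (2 * 10 ^ (J - i) - 1) : ℝ) - (g F (10 ^ (J - i) - 1) : ℝ))
          / (g F (2 * 10 ^ J) : ℝ))
        = (((Finset.range k).sum (fun i =>
            g F (2 * 10 ^ (J - i) - 1) - g F (10 ^ (J - i) - 1)) : ℕ) : ℝ)
          / (g F (2 * 10 ^ J) : ℝ) := by
      rw [← Finset.sum_div]
      congr 1
      rw [Nat.cast_sum]
      refine Finset.sum_congr rfl fun i _ => ?_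
      rw [Nat.cast_sub (hgm i)]
    rw [hLs]
    show _ ≤ (((Finset.Icc 1 (g F (2 * 10 ^ J))).filter
        (fun n => ∃ j : ℕ, 10 ^ j ≤ F n ∧ F n < 2 * 10 ^ j)).card : ℝ)
      / (g F (2 * 10 ^ J) : ℝ)
    gcongr
  refine ((hev1.and hev2).mono fun J h => le_trans h.1.le h.2).frequently

/-- Let `F : ℕ → ℕ` be a strictly increasing non-constant polynomial of degree
`d ≥ 1` with positive leading coefficient, and `N_J = max {n : F n ≤ 2·10^J}`.
Then the limsup over `J` of the proportion of `n ≤ N_J` whose image `F n` has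
leading decimal digit `1` is at least `5^(1/d)(2^(1/d)-1)/(2(10^(1/d)-1))`. -/
theorem stmt9 (f : Polynomial ℝ) (d : ℕ) (hd : 1 ≤ d) (hdeg : f.natDegree = d)
    (hc : 0 < f.leadingCoeff)
    (F : ℕ → ℕ) (hF : ∀ n : ℕ, (F n : ℝ) = f.eval (n : ℝ)) (hmono : StrictMono F) :
    (5 : ℝ) ^ ((1 : ℝ) / d) * ((2 : ℝ) ^ ((1 : ℝ) / d) - 1)
        / (2 * ((10 : ℝ) ^ ((1 : ℝ) / d) - 1))
      ≤ Filter.limsup (fun J : ℕ =>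
          (((Finset.Icc 1 (Nat.findGreatest (fun n => F n ≤ 2 * 10 ^ J) (2 * 10 ^ J))).filter
              (fun n => ∃ j : ℕ, 10 ^ j ≤ F n ∧ F n < 2 * 10 ^ j)).card : ℝ)
            / (Nat.findGreatest (fun n => F n ≤ 2 * 10 ^ J) (2 * 10 ^ J) : ℝ))
        Filter.atTop :=
  stmt9' f d hd hdeg hc F hF hmono
end

section
/- For every natural number d ≥ 1, 5^{1/d}·(2^{1/d} − 1) / (2·(10^{1/d} − 1)) ≥ log 2 / (2 log 10). -/
open Real

/-- Key inequality from convexity of `exp`: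
`log 10 * exp (x * log 5) ≤ log 2 + log 5 * exp (x * log 10)`. -/
lemma key_exp_ineq (x : ℝ) :
    Real.log 10 * Real.exp (x * Real.log 5) ≤
      Real.log 2 + Real.log 5 * Real.exp (x * Real.log 10) := by
  have h2 : (0:ℝ) < Real.log 2 := Real.log_pos (by norm_num)
  have h5 : (0:ℝ) < Real.log 5 := Real.log_pos (by norm_num)
  have h10 : Real.log 10 = Real.log 2 + Real.log 5 := by
    rw [show (10:ℝ) = 2 * 5 by norm_num, Real.log_mul (by norm_num) (by norm_num)]
  have h10pos : (0:ℝ) < Real.log 10 := by rw [h10]; linarith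
  have hc := convexOn_exp.2 (Set.mem_univ (0:ℝ)) (Set.mem_univ (x * Real.log 10))
      (le_of_lt (div_pos h2 h10pos)) (le_of_lt (div_pos h5 h10pos))
      (by field_simp; linarith)
  simp only [smul_eq_mul, mul_zero, zero_add, Real.exp_zero, mul_one] at hc
  have harg : Real.log 5 / Real.log 10 * (x * Real.log 10) = x * Real.log 5 := by
    field_simp
  rw [harg] at hc
  have := mul_le_mul_of_nonneg_left hc (le_of_lt h10pos)
  calc Real.log 10 * Real.exp (x * Real.log 5)
      ≤ Real.log 10 * (Real.log 2 / Real.log 10 + Real.log 5 / Real.log 10 * Real.exp (x * Real.log 10)) := this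
    _ = Real.log 2 + Real.log 5 * Real.exp (x * Real.log 10) := by
        field_simp

/-- For every natural `d ≥ 1`,
`5^(1/d)·(2^(1/d) - 1)/(2·(10^(1/d) - 1)) ≥ log 2 / (2 log 10)`. -/
theorem stmt10 (d : ℕ) (hd : 1 ≤ d) :
    Real.log 2 / (2 * Real.log 10) ≤
      (5 : ℝ) ^ ((1 : ℝ) / d) * ((2 : ℝ) ^ ((1 : ℝ) / d) - 1)
        / (2 * ((10 : ℝ) ^ ((1 : ℝ) / d) - 1)) := by
  set y : ℝ := (1 : ℝ) / d with hy
  have hdpos : (0:ℝ) < d := by exact_mod_cast Nat.lt_of_lt_of_le Nat.zero_lt_one hd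
  have hypos : 0 < y := by positivity
  have h2 : (0:ℝ) < Real.log 2 := Real.log_pos (by norm_num)
  have h5 : (0:ℝ) < Real.log 5 := Real.log_pos (by norm_num)
  have h10eq : Real.log 10 = Real.log 2 + Real.log 5 := by
    rw [show (10:ℝ) = 2 * 5 by norm_num, Real.log_mul (by norm_num) (by norm_num)]
  have h10pos : (0:ℝ) < Real.log 10 := by rw [h10eq]; linarith
  have h10y : (10:ℝ) ^ y = Real.exp (y * Real.log 10) := by
    rw [Real.rpow_def_of_pos (by norm_num)]; ring_nf
  have h5y : (5:ℝ) ^ y = Real.exp (y * Real.log 5) := by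
    rw [Real.rpow_def_of_pos (by norm_num)]; ring_nf
  have hmul : (5:ℝ) ^ y * (2:ℝ) ^ y = (10:ℝ) ^ y := by
    rw [← Real.mul_rpow (by norm_num) (by norm_num)]; norm_num
  have h10gt : (1:ℝ) < (10:ℝ) ^ y :=
    Real.one_lt_rpow_iff_of_pos (by norm_num) |>.2 (Or.inl ⟨by norm_num, hypos⟩)
  have hdenom : (0:ℝ) < 2 * ((10:ℝ) ^ y - 1) := by linarith
  rw [div_le_div_iff₀ (by linarith) hdenom]
  have hkey := key_exp_ineq y
  rw [← h10y, ← h5y] at hkey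
  nlinarith [hkey, hmul, h10eq, h10gt]
end

section
/- The sequence y_n = 5^{1/n}(2^{1/n} − 1)/(2(10^{1/n} − 1)) for n ≥ 1 is monotonically decreasing in n. -/
open Finset in
lemma key_geom_ineq (p q : ℝ) (hp : 1 ≤ p) (hpq : p ≤ q) (m k : ℕ) :
    (p ^ (m + k) - 1) * (q ^ m - 1) ≤ (p ^ m - 1) * (q ^ (m + k) - 1) := by
  have hq : 1 ≤ q := hp.trans hpq
  have hp0 : (0 : ℝ) ≤ p := by linarith
  have hq0 : (0 : ℝ) ≤ q := by linarith
  -- geometric sums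
  set Sp : ℕ → ℝ := fun j => ∑ i ∈ range j, p ^ i with hSp
  set Sq : ℕ → ℝ := fun j => ∑ i ∈ range j, q ^ i with hSq
  have hSpnn : ∀ j, 0 ≤ Sp j := fun j => Finset.sum_nonneg fun i _ => pow_nonneg hp0 i
  have hSqnn : ∀ j, 0 ≤ Sq j := fun j => Finset.sum_nonneg fun i _ => pow_nonneg hq0 i
  have hS1 : ∀ j, Sp j ≤ Sq j := fun j =>
    Finset.sum_le_sum fun i _ => pow_le_pow_left₀ hp0 hpq i
  have hS2 : p ^ m * Sq m ≤ q ^ m * Sp m := by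
    simp only [hSp, hSq, Finset.mul_sum]
    apply Finset.sum_le_sum
    intro i hi
    have him : i ≤ m := le_of_lt (Finset.mem_range.mp hi)
    obtain ⟨j, rfl⟩ : ∃ j, m = i + j := ⟨m - i, by omega⟩
    calc p ^ (i + j) * q ^ i = (p ^ i * q ^ i) * p ^ j := by rw [pow_add]; ring
      _ ≤ (p ^ i * q ^ i) * q ^ j :=
          mul_le_mul_of_nonneg_left (pow_le_pow_left₀ hp0 hpq j)
            (mul_nonneg (pow_nonneg hp0 i) (pow_nonneg hq0 i))
      _ = q ^ (i + j) * p ^ i := by rw [pow_add]; ring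
  have h3 : (p ^ m * Sq m) * Sp k ≤ (q ^ m * Sp m) * Sq k :=
    mul_le_mul hS2 (hS1 k) (hSpnn k) (mul_nonneg (pow_nonneg hq0 m) (hSpnn m))
  have gp : ∀ j, p ^ j - 1 = Sp j * (p - 1) := fun j => (geom_sum_mul p j).symm
  have gq : ∀ j, q ^ j - 1 = Sq j * (q - 1) := fun j => (geom_sum_mul q j).symm
  have hp1 : (0:ℝ) ≤ p - 1 := by linarith
  have hq1 : (0:ℝ) ≤ q - 1 := by linarith
  have expand : ∀ x : ℝ, x ^ (m + k) - 1 = (x ^ m - 1) + x ^ m * (x ^ k - 1) := by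
    intro x; rw [pow_add]; ring
  rw [expand p, expand q]
  have hLK : p ^ m * (p ^ k - 1) * (q ^ m - 1) ≤ (p ^ m - 1) * (q ^ m * (q ^ k - 1)) := by
    rw [gp k, gq m, gp m, gq k]
    nlinarith [mul_le_mul_of_nonneg_right h3 (mul_nonneg hp1 hq1)]
  nlinarith [hLK]

/-- The sequence `y n = 5^(1/n)(2^(1/n) - 1)/(2(10^(1/n) - 1))`, `n ≥ 1`,
is monotonically decreasing. -/
theorem stmt12 (m n : ℕ) (hm : 1 ≤ m) (hmn : m ≤ n) :
    (5 : ℝ) ^ ((1 : ℝ) / n) * ((2 : ℝ) ^ ((1 : ℝ) / n) - 1)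
        / (2 * ((10 : ℝ) ^ ((1 : ℝ) / n) - 1))
      ≤ (5 : ℝ) ^ ((1 : ℝ) / m) * ((2 : ℝ) ^ ((1 : ℝ) / m) - 1)
        / (2 * ((10 : ℝ) ^ ((1 : ℝ) / m) - 1)) := by
  have hm0 : 0 < m := hm
  have hn0 : 0 < n := lt_of_lt_of_le hm0 hmn
  have hmR : (0:ℝ) < (m:ℝ) := by exact_mod_cast hm0
  have hnR : (0:ℝ) < (n:ℝ) := by exact_mod_cast hn0
  have hsplit : ∀ t : ℝ, (5:ℝ)^t * ((2:ℝ)^t - 1) = (10:ℝ)^t - (5:ℝ)^t := by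
    intro t
    have h10 : (10:ℝ)^t = (5:ℝ)^t * (2:ℝ)^t := by
      rw [← Real.mul_rpow (by norm_num) (by norm_num)]; norm_num
    rw [h10]; ring
  rw [hsplit, hsplit]
  set c : ℝ := 1 / ((m:ℝ) * (n:ℝ)) with hc
  have hc0 : 0 < c := by positivity
  have hcm : c * (m:ℝ) = 1 / (n:ℝ) := by
    rw [hc]; field_simp
  have hcn : c * (n:ℝ) = 1 / (m:ℝ) := by
    rw [hc]; field_simp
  have conv : ∀ (a : ℝ), 0 < a → (a ^ ((1:ℝ)/n) = (a ^ c) ^ m ∧ a ^ ((1:ℝ)/m) = (a ^ c) ^ n) := by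
    intro a ha
    constructor
    · rw [← hcm, Real.rpow_mul ha.le, Real.rpow_natCast]
    · rw [← hcn, Real.rpow_mul ha.le, Real.rpow_natCast]
  obtain ⟨h5n, h5m⟩ := conv 5 (by norm_num)
  obtain ⟨h10n, h10m⟩ := conv 10 (by norm_num)
  rw [h5n, h5m, h10n, h10m]
  set p : ℝ := (5:ℝ) ^ c with hpdef
  set q : ℝ := (10:ℝ) ^ c with hqdef
  have hp : 1 ≤ p := Real.one_le_rpow (by norm_num) hc0.le
  have hpq : p ≤ q := Real.rpow_le_rpow (by norm_num) (by norm_num) hc0.le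
  have hq : 1 < q := (Real.one_lt_rpow_iff_of_pos (by norm_num)).mpr
    (Or.inl ⟨by norm_num, hc0⟩)
  have hqm : 1 < q ^ m := one_lt_pow₀ hq hm0.ne'
  have hqn : 1 < q ^ n := one_lt_pow₀ hq hn0.ne'
  rw [div_le_div_iff₀ (by linarith) (by linarith)]
  obtain ⟨k, rfl⟩ : ∃ k, n = m + k := ⟨n - m, by omega⟩
  nlinarith [key_geom_ineq p q hp hpq m k]
end

section
/- For any non-constant polynomial f: ℕ → ℕ, the sequence (f(n))_{n≥1} is not a strong Benford sequence; equivalently, (log_{10} f(n))_n is not uniformly distributed modulo 1. -/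
open scoped Classical
open Filter

lemma aux_ratio_one : Tendsto (fun x : ℝ => x / (x - 1)) atTop (nhds 1) := by
  have h0 : Tendsto (fun x : ℝ => (x - 1)⁻¹) atTop (nhds 0) := by
    have ht : Tendsto (fun x : ℝ => x - 1) atTop atTop :=
      tendsto_atTop_add_const_right _ (-1) tendsto_id
    exact ht.inv_tendsto_atTop
  have h : Tendsto (fun x : ℝ => 1 + (x - 1)⁻¹) atTop (nhds (1 + 0)) :=
    tendsto_const_nhds.add h0
  rw [add_zero] at h
  refine h.congr' ?_
  filter_upwards [eventually_gt_atTop (1 : ℝ)] with x hx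
  have hne : x - 1 ≠ 0 := by linarith
  field_simp
  ring

lemma aux_frac_one : Tendsto (fun x : ℝ => (x - 1) / x) atTop (nhds 1) := by
  have h : Tendsto (fun x : ℝ => 1 - x⁻¹) atTop (nhds (1 - 0)) :=
    tendsto_const_nhds.sub tendsto_inv_atTop_zero
  rw [sub_zero] at h
  refine h.congr' ?_
  filter_upwards [eventually_gt_atTop (0 : ℝ)] with x hx
  field_simp

lemma aux_sub_one_atTop {N : ℕ → ℕ} (hN : Tendsto N atTop atTop) :
    Tendsto (fun k => N k - 1) atTop atTop := by
  rw [tendsto_atTop]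
  intro b
  filter_upwards [hN.eventually_ge_atTop (b + 1)] with k hk
  omega

lemma aux_inv (F : ℕ → ℕ) (A : ℝ) (hA : 0 < A) (d : ℕ)
    (hρ : Tendsto (fun j : ℕ => (F j : ℝ) / (A * (j : ℝ) ^ d)) atTop (nhds 1))
    (hpos : ∀ n, 0 < F n)
    (N : ℕ → ℕ) (hN : Tendsto N atTop atTop) (T : ℕ → ℝ) (hT : ∀ k, 0 < T k)
    (h1 : ∀ᶠ k in atTop, T k ≤ (F (N k) : ℝ))
    (h2 : ∀ᶠ k in atTop, ((F (N k - 1) : ℕ) : ℝ) < T k) :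
    Tendsto (fun k => A * (N k : ℝ) ^ d / T k) atTop (nhds 1) := by
  have hN1 : Tendsto (fun k => N k - 1) atTop atTop := aux_sub_one_atTop hN
  have hl : Tendsto (fun k => ((F (N k) : ℝ) / (A * (N k : ℝ) ^ d))⁻¹) atTop (nhds 1) := by
    simpa using (hρ.comp hN).inv₀ one_ne_zero
  have hcast : Tendsto (fun k => (N k : ℝ)) atTop atTop :=
    tendsto_natCast_atTop_atTop.comp hN
  have hu1 : Tendsto (fun k => ((N k : ℝ) / ((N k : ℝ) - 1)) ^ d) atTop (nhds 1) := by
    simpa using (aux_ratio_one.comp hcast).pow d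
  have hρ1 : Tendsto (fun k => ((F (N k - 1) : ℝ) / (A * ((N k - 1 : ℕ) : ℝ) ^ d))⁻¹)
      atTop (nhds 1) := by
    simpa using (hρ.comp hN1).inv₀ one_ne_zero
  have hu : Tendsto (fun k => ((N k : ℝ) / ((N k : ℝ) - 1)) ^ d *
      ((F (N k - 1) : ℝ) / (A * ((N k - 1 : ℕ) : ℝ) ^ d))⁻¹) atTop (nhds 1) := by
    simpa using hu1.mul hρ1
  refine tendsto_of_tendsto_of_tendsto_of_le_of_le' hl hu ?_ ?_
  · filter_upwards [h1] with k hk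
    rw [inv_div]
    exact div_le_div_of_nonneg_left (by positivity) (hT k) hk
  · filter_upwards [h2, hN.eventually_ge_atTop 2] with k hk h2k
    have hFpos : (0 : ℝ) < (F (N k - 1) : ℝ) := by exact_mod_cast hpos (N k - 1)
    have hcast1 : ((N k - 1 : ℕ) : ℝ) = (N k : ℝ) - 1 := by
      have h1 : (1 : ℕ) ≤ N k := by omega
      push_cast [Nat.cast_sub h1]
      ring
    have hn2 : (2 : ℝ) ≤ (N k : ℝ) := by exact_mod_cast h2k
    have hne : (N k : ℝ) - 1 ≠ 0 := by linarith
    have step1 : A * (N k : ℝ) ^ d / T k ≤ A * (N k : ℝ) ^ d / (F (N k - 1) : ℝ) :=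
      div_le_div_of_nonneg_left (by positivity) hFpos hk.le
    refine step1.trans_eq ?_
    rw [inv_div, hcast1, div_pow]
    field_simp

lemma aux_main (cc : ℕ → ℕ) (N M : ℕ → ℕ)
    (hNtop : Tendsto N atTop atTop) (hMtop : Tendsto M atTop atTop)
    (hNM : ∀ᶠ k in atTop, N k < M k)
    (hcount : ∀ᶠ k in atTop, cc (M k - 1) = cc (N k - 1) + (M k - N k))
    (Hc : Tendsto (fun n : ℕ => (cc n : ℝ) / n) atTop (nhds (1 / 2)))
    (d : ℕ)
    (htd : Tendsto (fun k => ((N k : ℝ) / (M k : ℝ)) ^ d) atTop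
      (nhds ((10 : ℝ) ^ (-(1 / 2) : ℝ)))) : False := by
  have hMR : Tendsto (fun k => (M k : ℝ)) atTop atTop :=
    tendsto_natCast_atTop_atTop.comp hMtop
  have hL1 : Tendsto (fun k => (cc (M k - 1) : ℝ) / ((M k - 1 : ℕ) : ℝ)) atTop (nhds (1 / 2)) :=
    Hc.comp (aux_sub_one_atTop hMtop)
  have hv : Tendsto (fun k => (cc (N k - 1) : ℝ) / ((N k - 1 : ℕ) : ℝ)) atTop (nhds (1 / 2)) :=
    Hc.comp (aux_sub_one_atTop hNtop)
  have hfrac : Tendsto (fun k => ((M k : ℝ) - 1) / (M k : ℝ)) atTop (nhds 1) :=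
    aux_frac_one.comp hMR
  have haM : Tendsto (fun k => (cc (M k - 1) : ℝ) / (M k : ℝ)) atTop (nhds (1 / 2)) := by
    have h := hL1.mul hfrac
    rw [mul_one] at h
    refine h.congr' ?_
    filter_upwards [hMtop.eventually_ge_atTop 2] with k hk
    have h1 : ((M k - 1 : ℕ) : ℝ) = (M k : ℝ) - 1 := by
      push_cast [Nat.cast_sub (show (1:ℕ) ≤ M k by omega)]; ring
    have h2 : (2 : ℝ) ≤ (M k : ℝ) := by exact_mod_cast hk
    have hm0 : (M k : ℝ) ≠ 0 := by linarith
    have hm1 : (M k : ℝ) - 1 ≠ 0 := by linarith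
    rw [h1]
    field_simp
  have hvM : Tendsto (fun k => ((cc (N k - 1) : ℝ) / ((N k - 1 : ℕ) : ℝ)) / (M k : ℝ))
      atTop (nhds 0) := by
    have h := hv.mul (tendsto_inv_atTop_zero.comp hMR)
    rw [mul_zero] at h
    refine h.congr ?_
    intro k
    rw [div_eq_mul_inv]
    rfl
  have he : Tendsto (fun k =>
      (1 - (cc (M k - 1) : ℝ) / (M k : ℝ) - ((cc (N k - 1) : ℝ) / ((N k - 1 : ℕ) : ℝ)) / (M k : ℝ)) /
        (1 - (cc (N k - 1) : ℝ) / ((N k - 1 : ℕ) : ℝ))) atTop (nhds 1) := by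
    have hone : Tendsto (fun _ : ℕ => (1:ℝ)) atTop (nhds 1) := tendsto_const_nhds
    have h := ((hone.sub haM).sub hvM).div (hone.sub hv)
      (by norm_num : (1 : ℝ) - 1 / 2 ≠ 0)
    norm_num at h
    exact h
  have ht1 : Tendsto (fun k => (N k : ℝ) / (M k : ℝ)) atTop (nhds 1) := by
    refine he.congr' ?_
    filter_upwards [hcount, hNM, hNtop.eventually_ge_atTop 2,
      hv.eventually_lt_const (by norm_num : (1:ℝ)/2 < 1)] with k hck hnm hn2 hvlt
    have hn1 : ((N k - 1 : ℕ) : ℝ) = (N k : ℝ) - 1 := by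
      push_cast [Nat.cast_sub (show (1:ℕ) ≤ N k by omega)]; ring
    have hcast : (cc (M k - 1) : ℝ) = (cc (N k - 1) : ℝ) + ((M k : ℝ) - (N k : ℝ)) := by
      rw [hck]
      push_cast [Nat.cast_sub hnm.le]
      ring
    have hge2 : (2:ℝ) ≤ (N k : ℝ) := by exact_mod_cast hn2
    have hmn : (N k : ℝ) < (M k : ℝ) := by exact_mod_cast hnm
    set a := (cc (M k - 1) : ℝ)
    set b := (cc (N k - 1) : ℝ)
    set n := (N k : ℝ) with hn
    set m := (M k : ℝ) with hm
    have hm0 : m ≠ 0 := by linarith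
    have hne1 : n - 1 ≠ 0 := by linarith
    rw [hn1] at hvlt ⊢
    have hv1 : 1 - b / (n - 1) ≠ 0 := by
      have hlt : b / (n - 1) < 1 := hvlt
      intro h
      rw [sub_eq_zero] at h
      rw [← h] at hlt
      exact absurd hlt (lt_irrefl _)
    rw [div_eq_div_iff hv1 hm0, hcast]
    field_simp
    ring
  have hfinal : Tendsto (fun k => ((N k : ℝ) / (M k : ℝ)) ^ d) atTop (nhds 1) := by
    have := ht1.pow d
    rwa [one_pow] at this
  have heq : (1 : ℝ) = (10 : ℝ) ^ (-(1 / 2) : ℝ) := tendsto_nhds_unique hfinal htd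
  have hlt : (10 : ℝ) ^ (-(1 / 2) : ℝ) < 1 :=
    Real.rpow_lt_one_of_one_lt_of_neg (by norm_num) (by norm_num)
  linarith

/-- For any non-constant polynomial `F : ℕ → ℕ` (degree `d ≥ 1`, positive
leading coefficient, positive values), the sequence `(F n)` is not a strong
Benford sequence: `(log₁₀ (F n))` is not uniformly distributed modulo 1. -/
theorem stmt18 (f : Polynomial ℝ) (hd : 1 ≤ f.natDegree) (hc : 0 < f.leadingCoeff)
    (F : ℕ → ℕ) (hF : ∀ n : ℕ, (F n : ℝ) = f.eval (n : ℝ)) (hpos : ∀ n, 0 < F n) :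
    ¬ (∀ a b : ℝ, 0 ≤ a → a < b → b ≤ 1 →
        Tendsto (fun N : ℕ => (((Finset.Icc 1 N).filter
            (fun n => Int.fract (Real.log (F n) / Real.log 10) ∈ Set.Ico a b)).card : ℝ) / N)
          atTop (nhds (b - a))) := by
  intro H
  -- ρ limit
  have hρ : Tendsto (fun j : ℕ => (F j : ℝ) / (f.leadingCoeff * (j : ℝ) ^ f.natDegree))
      atTop (nhds 1) := by
    have hne : ∀ᶠ x : ℝ in atTop, f.leadingCoeff * x ^ f.natDegree ≠ 0 := by
      filter_upwards [eventually_gt_atTop (0 : ℝ)] with x hx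
      positivity
    have h := (Asymptotics.isEquivalent_iff_tendsto_one hne).1 (Polynomial.isEquivalent_atTop_lead f)
    have h2 := h.comp (tendsto_natCast_atTop_atTop (R := ℝ))
    refine h2.congr ?_
    intro n
    simp only [Function.comp, Pi.div_apply, hF n]
  -- F → ∞
  have hFtop : Tendsto (fun n : ℕ => (F n : ℝ)) atTop atTop := by
    have h0 : 0 < f.degree := Polynomial.natDegree_pos_iff_degree_pos.1 hd
    have h := f.tendsto_atTop_of_leadingCoeff_nonneg h0 hc.le
    have h2 := h.comp (tendsto_natCast_atTop_atTop (R := ℝ))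
    refine h2.congr ?_
    intro n
    simp [Function.comp, hF n]
  -- thresholds
  set R : ℕ → ℝ := fun k => (10 : ℝ) ^ (k : ℝ) with hR
  set S : ℕ → ℝ := fun k => (10 : ℝ) ^ ((k : ℝ) + 1 / 2) with hS
  have hRpos : ∀ k, 0 < R k := fun k => Real.rpow_pos_of_pos (by norm_num) _
  have hSpos : ∀ k, 0 < S k := fun k => Real.rpow_pos_of_pos (by norm_num) _
  have hRS : ∀ k, R k ≤ S k := by
    intro k
    rw [hR, hS]
    apply Real.rpow_le_rpow_of_exponent_le (by norm_num)
    linarith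
  have hexN : ∀ k : ℕ, ∃ n : ℕ, ∀ m, n ≤ m → R k ≤ (F m : ℝ) := by
    intro k
    obtain ⟨a, ha⟩ := eventually_atTop.1 (hFtop.eventually_ge_atTop (R k))
    exact ⟨a, ha⟩
  have hexM : ∀ k : ℕ, ∃ n : ℕ, S k ≤ (F n : ℝ) := fun k =>
    (hFtop.eventually_ge_atTop (S k)).exists
  set N : ℕ → ℕ := fun k => Nat.find (hexN k) with hN
  set M : ℕ → ℕ := fun k => Nat.find (hexM k) with hM
  have hNspec : ∀ k m, N k ≤ m → R k ≤ (F m : ℝ) := fun k => Nat.find_spec (hexN k)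
  have hMspec : ∀ k, S k ≤ (F (M k) : ℝ) := fun k => Nat.find_spec (hexM k)
  have hMmin : ∀ k n, n < M k → (F n : ℝ) < S k := fun k n hn =>
    not_le.1 (Nat.find_min (hexM k) hn)
  have hNpred : ∀ k, 1 ≤ N k → (F (N k - 1) : ℝ) < R k := by
    intro k hk
    have hmin := Nat.find_min (hexN k) (show N k - 1 < N k by omega)
    push_neg at hmin
    obtain ⟨m, hm1, hm2⟩ := hmin
    rcases (show m = N k - 1 ∨ N k ≤ m by omega) with h | h
    · rwa [← h]
    · exact absurd (hNspec k m h) (not_le.2 hm2)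
  -- tendsto atTop
  have hkey : ∀ G : ℕ → ℕ, (∀ k, R k ≤ (F (G k) : ℝ)) → Tendsto G atTop atTop := by
    intro G hG
    rw [tendsto_atTop]
    intro B
    set C : ℕ := (Finset.Icc 0 B).sup F with hC
    obtain ⟨K, hK⟩ := pow_unbounded_of_one_lt (C : ℝ) (by norm_num : (1 : ℝ) < 10)
    filter_upwards [eventually_ge_atTop K] with k hk
    by_contra hcon
    push_neg at hcon
    have h1 : F (G k) ≤ C := Finset.le_sup (Finset.mem_Icc.2 ⟨Nat.zero_le _, hcon.le⟩)
    have h2 : ((10 : ℝ) ^ K : ℝ) ≤ R k := by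
      rw [hR, ← Real.rpow_natCast 10 K]
      apply Real.rpow_le_rpow_of_exponent_le (by norm_num)
      exact_mod_cast hk
    have h3 : (F (G k) : ℝ) ≤ (C : ℝ) := by exact_mod_cast h1
    have := hG k
    linarith
  have hNtop : Tendsto N atTop atTop := hkey N (fun k => hNspec k (N k) le_rfl)
  have hMtop : Tendsto M atTop atTop := hkey M (fun k => le_trans (hRS k) (hMspec k))
  -- asymptotics
  have hX := aux_inv F f.leadingCoeff hc f.natDegree hρ hpos N hNtop R hRpos
    (Eventually.of_forall (fun k => hNspec k (N k) le_rfl))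
    (by filter_upwards [hNtop.eventually_ge_atTop 1] with k hk; exact hNpred k hk)
  have hY := aux_inv F f.leadingCoeff hc f.natDegree hρ hpos M hMtop S hSpos
    (Eventually.of_forall hMspec)
    (by filter_upwards [hMtop.eventually_ge_atTop 1] with k hk
        exact hMmin k (M k - 1) (by omega))
  -- t ^ d → 10 ^ (-1/2)
  have htd : Tendsto (fun k => ((N k : ℝ) / (M k : ℝ)) ^ f.natDegree) atTop
      (nhds ((10 : ℝ) ^ (-(1 / 2) : ℝ))) := by
    have hYinv := hY.inv₀ one_ne_zero
    have hprod := (hX.mul hYinv).mul_const ((10 : ℝ) ^ (-(1 / 2) : ℝ))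
    rw [inv_one, mul_one, one_mul] at hprod
    refine hprod.congr' ?_
    filter_upwards [hMtop.eventually_ge_atTop 1] with k hk
    have hm0 : (M k : ℝ) ≠ 0 := by
      have : (1:ℝ) ≤ (M k : ℝ) := by exact_mod_cast hk
      linarith
    have hA0 : f.leadingCoeff ≠ 0 := ne_of_gt hc
    have hRk : R k ≠ 0 := ne_of_gt (hRpos k)
    have hhalf : (0:ℝ) < (10:ℝ) ^ ((1:ℝ)/2) := Real.rpow_pos_of_pos (by norm_num) _
    have hSRk : S k = R k * (10:ℝ) ^ ((1:ℝ)/2) := by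
      rw [hR, hS, ← Real.rpow_add (by norm_num : (0:ℝ) < 10)]
    have hneg : (10:ℝ) ^ (-(1 / 2) : ℝ) = ((10:ℝ) ^ ((1:ℝ)/2))⁻¹ := by
      rw [← Real.rpow_neg (by norm_num : (0:ℝ) ≤ 10)]
    rw [hSRk, hneg, div_pow]
    field_simp
  -- N k < M k eventually
  have h12lt : (10 : ℝ) ^ (-(1 / 2) : ℝ) < 1 :=
    Real.rpow_lt_one_of_one_lt_of_neg (by norm_num) (by norm_num)
  have hNM : ∀ᶠ k in atTop, N k < M k := by
    filter_upwards [htd.eventually_lt_const h12lt, hMtop.eventually_ge_atTop 1] with k hk hm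
    by_contra h
    push_neg at h
    have hmpos : (0:ℝ) < (M k : ℝ) := by exact_mod_cast hm
    have h1 : (1:ℝ) ≤ (N k : ℝ) / (M k : ℝ) := by
      rw [le_div_iff₀ hmpos, one_mul]
      exact_mod_cast h
    have h2 : (1:ℝ) ≤ ((N k : ℝ) / (M k : ℝ)) ^ f.natDegree := one_le_pow₀ h1
    linarith
  -- counting identity
  have hcount : ∀ᶠ k in atTop, ((Finset.Icc 1 (M k - 1)).filter
      (fun n => Int.fract (Real.log (F n) / Real.log 10) ∈ Set.Ico (0:ℝ) (1/2))).card =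
      ((Finset.Icc 1 (N k - 1)).filter
      (fun n => Int.fract (Real.log (F n) / Real.log 10) ∈ Set.Ico (0:ℝ) (1/2))).card
      + (M k - N k) := by
    filter_upwards [hNtop.eventually_ge_atTop 2, hNM] with k h2 hnm
    have hsplit : Finset.Icc 1 (M k - 1) =
        Finset.Icc 1 (N k - 1) ∪ Finset.Ioc (N k - 1) (M k - 1) := by
      ext x
      simp only [Finset.mem_Icc, Finset.mem_Ioc, Finset.mem_union]
      omega
    have hdis : Disjoint (Finset.Icc 1 (N k - 1)) (Finset.Ioc (N k - 1) (M k - 1)) := by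
      rw [Finset.disjoint_left]
      intro x hx hx2
      simp only [Finset.mem_Icc] at hx
      simp only [Finset.mem_Ioc] at hx2
      omega
    rw [hsplit, Finset.filter_union,
      Finset.card_union_of_disjoint (Finset.disjoint_filter_filter hdis)]
    have hmem : ∀ n ∈ Finset.Ioc (N k - 1) (M k - 1),
        Int.fract (Real.log (F n) / Real.log 10) ∈ Set.Ico (0:ℝ) (1/2) := by
      intro n hn
      rw [Finset.mem_Ioc] at hn
      have hn1 : N k ≤ n := by omega
      have hn2 : n < M k := by omega
      have hlow : R k ≤ (F n : ℝ) := hNspec k n hn1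
      have hhigh : (F n : ℝ) < S k := hMmin k n hn2
      rw [hR] at hlow
      rw [hS] at hhigh
      have hFn : (0:ℝ) < (F n : ℝ) := by exact_mod_cast hpos n
      have hlog10 : (0:ℝ) < Real.log 10 := Real.log_pos (by norm_num)
      have hx1 : (k:ℝ) ≤ Real.log (F n) / Real.log 10 := by
        rw [le_div_iff₀ hlog10]
        calc (k:ℝ) * Real.log 10 = Real.log ((10:ℝ) ^ (k:ℝ)) :=
              (Real.log_rpow (by norm_num) _).symm
        _ ≤ Real.log (F n) := Real.log_le_log (Real.rpow_pos_of_pos (by norm_num) _) hlow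
      have hx2 : Real.log (F n) / Real.log 10 < (k:ℝ) + 1/2 := by
        rw [div_lt_iff₀ hlog10]
        calc Real.log (F n) < Real.log ((10:ℝ) ^ ((k:ℝ) + 1/2)) := Real.log_lt_log hFn hhigh
        _ = ((k:ℝ) + 1/2) * Real.log 10 := Real.log_rpow (by norm_num) _
      have hfl : ⌊Real.log (F n) / Real.log 10⌋ = (k : ℤ) := by
        rw [Int.floor_eq_iff]
        constructor <;> push_cast <;> linarith
      rw [Set.mem_Ico, Int.fract, hfl]
      push_cast
      constructor <;> linarith
    rw [Finset.filter_true_of_mem hmem, Nat.card_Ioc]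
    omega
  -- the uniform distribution hypothesis at [0, 1/2)
  have Hc := H 0 (1/2) le_rfl (by norm_num) (by norm_num)
  rw [show (1:ℝ)/2 - 0 = 1/2 by norm_num] at Hc
  exact aux_main
    (fun n => ((Finset.Icc 1 n).filter
      (fun m => Int.fract (Real.log (F m) / Real.log 10) ∈ Set.Ico (0:ℝ) (1/2))).card)
    N M hNtop hMtop hNM hcount Hc f.natDegree htd
end
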